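/- arXiv:1801.05593 — 4 statements merged into one kernel-verified Lean document; each statement's English description precedes it below -/
import Mathlib

section
/- Under these assumptions, the Lin–Lu–Yau Ricci curvature of the adjacent pair satisfies κ(τ,σ) ≥ Ric(τ,σ)/(d_τ∨d_σ) + 2·(1/(d_τ∧d_σ) − 1/(d_τ∨d_σ)) + (d_τ∧d_σ)/(d_τ∨d_σ) − 1. -/
open Finset Filter Topology

noncomputable section

/-- A coupling between two (probability) mass functions `μ` and `ν` on a finite
vertex set: a matrix with values in `[0,1]` whose row sums are `μ` and whose
column sums are `ν`. -/
def IsCoupling {V : Type*} [Fintype V] (A : V → V → ℝ) (μ ν : V → ℝ) : Prop :=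
  (∀ x y, 0 ≤ A x y ∧ A x y ≤ 1) ∧
  (∀ x, ∑ y, A x y = μ x) ∧
  (∀ y, ∑ x, A x y = ν y)

/-- The (1-)Wasserstein distance between two mass functions on the vertex set of a
graph, with respect to the graph distance. -/
def Wass {V : Type*} [Fintype V] (G : SimpleGraph V) (μ ν : V → ℝ) : ℝ :=
  sInf {c | ∃ A : V → V → ℝ, IsCoupling A μ ν ∧
    c = ∑ x, ∑ y, A x y * (G.dist x y : ℝ)}

/-- The probability measure `m_x^α`: mass `α` at `x`, mass `(1-α)/d_x` at each
neighbor of `x`, and `0` elsewhere. -/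
def mMeas {V : Type*} [Fintype V] [DecidableEq V] (G : SimpleGraph V)
    [DecidableRel G.Adj] (α : ℝ) (x : V) : V → ℝ :=
  fun z => if z = x then α else if G.Adj x z then (1 - α) / (G.degree x : ℝ) else 0

/-- The `α`-Ricci curvature `κ_α(x,y) = 1 - W(m_x^α, m_y^α)/d(x,y)`. -/
def kappaAlpha {V : Type*} [Fintype V] [DecidableEq V] (G : SimpleGraph V)
    [DecidableRel G.Adj] (α : ℝ) (x y : V) : ℝ :=
  1 - Wass G (mMeas G α x) (mMeas G α y) / (G.dist x y : ℝ)

/-- The Lin–Lu–Yau Ricci curvature `κ(x,y) = lim_{α→1⁻} κ_α(x,y)/(1-α)`. -/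
def kappa {V : Type*} [Fintype V] [DecidableEq V] (G : SimpleGraph V)
    [DecidableRel G.Adj] (x y : V) : ℝ :=
  limUnder (𝓝[<] (1 : ℝ)) (fun α => kappaAlpha G α x y / (1 - α))

/-- The (non-normalized) graph Laplacian `(Δf)(x) = d_x f(x) - ∑_{y ~ x} f(y)`. -/
def lap {V : Type*} [Fintype V] [DecidableEq V] (G : SimpleGraph V)
    [DecidableRel G.Adj] (f : V → ℝ) (x : V) : ℝ :=
  (G.degree x : ℝ) * f x - ∑ y ∈ G.neighborFinset x, f y

end
set_option linter.unusedSectionVars false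
section Generic
variable {V : Type*} [Fintype V] [DecidableEq V] (G : SimpleGraph V) [DecidableRel G.Adj]

lemma cost_nonneg {A : V → V → ℝ} (h : ∀ x y, 0 ≤ A x y) :
    0 ≤ ∑ x, ∑ y, A x y * (G.dist x y : ℝ) := by
  apply Finset.sum_nonneg; intro x _; apply Finset.sum_nonneg; intro y _
  exact mul_nonneg (h x y) (Nat.cast_nonneg _)

lemma wassBddBelow (μ ν : V → ℝ) :
    BddBelow {c | ∃ A : V → V → ℝ, IsCoupling A μ ν ∧
      c = ∑ x, ∑ y, A x y * (G.dist x y : ℝ)} := by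
  refine ⟨0, fun c hc => ?_⟩
  obtain ⟨A, hA, rfl⟩ := hc
  exact cost_nonneg G (fun x y => (hA.1 x y).1)

lemma Wass_le_cost {μ ν : V → ℝ} {A : V → V → ℝ} (h : IsCoupling A μ ν) :
    Wass G μ ν ≤ ∑ x, ∑ y, A x y * (G.dist x y : ℝ) :=
  csInf_le (wassBddBelow G μ ν) ⟨A, h, rfl⟩

lemma le_Wass {μ ν : V → ℝ} {b : ℝ} (hne : ∃ A : V → V → ℝ, IsCoupling A μ ν)
    (hb : ∀ A : V → V → ℝ, IsCoupling A μ ν →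
      b ≤ ∑ x, ∑ y, A x y * (G.dist x y : ℝ)) :
    b ≤ Wass G μ ν := by
  obtain ⟨A, hA⟩ := hne
  exact le_csInf ⟨_, A, hA, rfl⟩ (by rintro c ⟨A', hA', rfl⟩; exact hb A' hA')

lemma prodCoupling {μ ν : V → ℝ} (hμ0 : ∀ x, 0 ≤ μ x) (hμ1 : ∀ x, μ x ≤ 1)
    (hν0 : ∀ x, 0 ≤ ν x) (hν1 : ∀ x, ν x ≤ 1)
    (hμs : ∑ x, μ x = 1) (hνs : ∑ x, ν x = 1) :
    IsCoupling (fun x y => μ x * ν y) μ ν := by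
  refine ⟨fun x y => ⟨mul_nonneg (hμ0 x) (hν0 y),
      mul_le_one₀ (hμ1 x) (hν0 y) (hν1 y)⟩, fun x => ?_, fun y => ?_⟩
  · rw [← Finset.mul_sum, hνs, mul_one]
  · rw [← Finset.sum_mul, hμs, one_mul]

lemma sum_mMeas_mul (α : ℝ) (x : V) (f : V → ℝ) :
    ∑ z, mMeas G α x z * f z
      = α * f x + ((1 - α) / (G.degree x : ℝ)) * ∑ y ∈ G.neighborFinset x, f y := by
  have key : ∀ z, mMeas G α x z * f z
      = (if z = x then α * f x else 0)
        + (if z ∈ G.neighborFinset x then ((1 - α) / (G.degree x : ℝ)) * f z else 0) := by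
    intro z
    simp only [mMeas, SimpleGraph.mem_neighborFinset]
    by_cases h : z = x
    · subst h; simp [G.irrefl]
    · simp only [h, if_false]; split_ifs <;> ring
  rw [Finset.sum_congr rfl (fun z _ => key z), Finset.sum_add_distrib]
  congr 1
  · simp
  · rw [Finset.sum_ite_mem, Finset.univ_inter, Finset.mul_sum]

lemma sum_mMeas (α : ℝ) (x : V) (hd : 0 < G.degree x) : ∑ z, mMeas G α x z = 1 := by
  have := sum_mMeas_mul G α x (fun _ => 1)
  simp only [mul_one] at this
  rw [this, Finset.sum_const, SimpleGraph.card_neighborFinset_eq_degree]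
  have : (G.degree x : ℝ) ≠ 0 := Nat.cast_ne_zero.mpr hd.ne'
  rw [nsmul_eq_mul, mul_one, div_mul_cancel₀ _ this]; ring

lemma mMeas_nonneg {α : ℝ} (hα0 : 0 ≤ α) (hα1 : α ≤ 1) (x z : V) :
    0 ≤ mMeas G α x z := by
  unfold mMeas
  split_ifs with h1 h2
  · exact hα0
  · exact div_nonneg (by linarith) (Nat.cast_nonneg _)
  · exact le_rfl

lemma mMeas_le_one {α : ℝ} (hα0 : 0 ≤ α) (hα1 : α ≤ 1) (x z : V) :
    mMeas G α x z ≤ 1 := by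
  unfold mMeas
  split_ifs with h1 h2
  · exact hα1
  · have hd : (1 : ℝ) ≤ (G.degree x : ℝ) := by
      have : 0 < G.degree x := by
        rw [← SimpleGraph.card_neighborFinset_eq_degree, Finset.card_pos]
        exact ⟨z, (SimpleGraph.mem_neighborFinset G x z).mpr h2⟩
      exact_mod_cast this
    rw [div_le_one (by linarith)]; linarith
  · exact zero_le_one

/-- existence of a coupling between the two measures -/
lemma coupling_exists {α : ℝ} (hα0 : 0 ≤ α) (hα1 : α ≤ 1) {x y : V}
    (hx : 0 < G.degree x) (hy : 0 < G.degree y) :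
    ∃ A : V → V → ℝ, IsCoupling A (mMeas G α x) (mMeas G α y) :=
  ⟨_, prodCoupling (mMeas_nonneg G hα0 hα1 x) (mMeas_le_one G hα0 hα1 x)
    (mMeas_nonneg G hα0 hα1 y) (mMeas_le_one G hα0 hα1 y)
    (sum_mMeas G α x hx) (sum_mMeas G α y hy)⟩

/-- easy direction of Kantorovich duality -/
lemma duality {μ ν : V → ℝ} {f : V → ℝ}
    (hf : ∀ x y : V, f x - f y ≤ (G.dist x y : ℝ)) {A : V → V → ℝ}
    (h : IsCoupling A μ ν) :
    ∑ x, μ x * f x - ∑ y, ν y * f y ≤ ∑ x, ∑ y, A x y * (G.dist x y : ℝ) := by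
  obtain ⟨hA01, hrow, hcol⟩ := h
  have h1 : ∑ x, μ x * f x = ∑ x, ∑ y, A x y * f x := by
    refine Finset.sum_congr rfl fun x _ => ?_
    rw [← hrow x, Finset.sum_mul]
  have h2 : ∑ y, ν y * f y = ∑ x, ∑ y, A x y * f y := by
    rw [Finset.sum_comm]
    refine Finset.sum_congr rfl fun y _ => ?_
    rw [← hcol y, Finset.sum_mul]
  rw [h1, h2, ← Finset.sum_sub_distrib]
  refine Finset.sum_le_sum fun x _ => ?_
  rw [← Finset.sum_sub_distrib]
  refine Finset.sum_le_sum fun y _ => ?_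
  rw [← mul_sub]
  exact mul_le_mul_of_nonneg_left (hf x y) (hA01 x y).1

end Generic
section Mono
variable {V : Type*} [Fintype V] [DecidableEq V] (G : SimpleGraph V) [DecidableRel G.Adj]

lemma mMeas_convex {a b : ℝ} (ha : a < 1) (x z : V) :
    mMeas G b x z = ((b - a) / (1 - a)) * (if z = x then 1 else 0)
      + ((1 - b) / (1 - a)) * mMeas G a x z := by
  have h1a : (1 : ℝ) - a ≠ 0 := by linarith
  unfold mMeas
  split_ifs with h1 h2
  · field_simp; ring
  · rw [div_mul_div_comm, mul_comm (1 - b) (1 - a), ← div_mul_div_comm,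
      div_self h1a, one_mul, mul_zero, zero_add]
  · ring

lemma degree_pos_left {τ σ : V} (hadj : G.Adj τ σ) : 0 < G.degree τ := by
  rw [← SimpleGraph.card_neighborFinset_eq_degree, Finset.card_pos]
  exact ⟨σ, (SimpleGraph.mem_neighborFinset G τ σ).mpr hadj⟩

lemma kappaAlpha_mono {τ σ : V} (hadj : G.Adj τ σ) {a b : ℝ}
    (ha0 : 0 ≤ a) (hab : a ≤ b) (hb1 : b < 1) :
    kappaAlpha G a τ σ / (1 - a) ≤ kappaAlpha G b τ σ / (1 - b) := by
  have ha1 : a < 1 := lt_of_le_of_lt hab hb1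
  have h1a : (0 : ℝ) < 1 - a := by linarith
  have h1b : (0 : ℝ) < 1 - b := by linarith
  have hdτ : 0 < G.degree τ := degree_pos_left G hadj
  have hdσ : 0 < G.degree σ := degree_pos_left G hadj.symm
  have hdist : (G.dist τ σ : ℝ) = 1 := by
    rw [SimpleGraph.dist_eq_one_iff_adj.mpr hadj]; norm_num
  set lam : ℝ := (b - a) / (1 - a) with hlam
  have hlam0 : 0 ≤ lam := div_nonneg (by linarith) h1a.le
  have hlamc : 1 - lam = (1 - b) / (1 - a) := by
    rw [hlam]; field_simp; ring
  have h1l : 0 < 1 - lam := by rw [hlamc]; positivity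
  have hlam1 : lam ≤ 1 := by linarith
  -- W_b ≤ lam + (1 - lam) * W_a
  have key : Wass G (mMeas G b τ) (mMeas G b σ)
      ≤ lam + (1 - lam) * Wass G (mMeas G a τ) (mMeas G a σ) := by
    have hWb : ∀ A : V → V → ℝ, IsCoupling A (mMeas G a τ) (mMeas G a σ) →
        Wass G (mMeas G b τ) (mMeas G b σ)
          ≤ lam + (1 - lam) * (∑ x, ∑ y, A x y * (G.dist x y : ℝ)) := by
      intro A hA
      obtain ⟨hA01, hrow, hcol⟩ := hA
      set B : V → V → ℝ := fun x y =>
        lam * (if x = τ ∧ y = σ then 1 else 0) + (1 - lam) * A x y with hB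
      have hBc : IsCoupling B (mMeas G b τ) (mMeas G b σ) := by
        refine ⟨fun x y => ?_, fun x => ?_, fun y => ?_⟩
        · constructor
          · apply add_nonneg
            · exact mul_nonneg hlam0 (by split_ifs <;> norm_num)
            · exact mul_nonneg (by linarith) (hA01 x y).1
          · have h1 : lam * (if x = τ ∧ y = σ then 1 else 0) ≤ lam * 1 :=
              mul_le_mul_of_nonneg_left (by split_ifs <;> norm_num) hlam0
            have h2 : (1 - lam) * A x y ≤ (1 - lam) * 1 :=
              mul_le_mul_of_nonneg_left (hA01 x y).2 (by linarith)
            simp only [hB]; nlinarith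
        · simp only [hB, Finset.sum_add_distrib, ← Finset.mul_sum, hrow]
          have hsum : ∑ y, (if x = τ ∧ y = σ then (1:ℝ) else 0)
              = if x = τ then 1 else 0 := by
            by_cases hx : x = τ <;> simp [hx]
          rw [hsum]
          conv_rhs => rw [mMeas_convex G ha1 τ x]
          rw [← hlamc, ← hlam]
        · simp only [hB, Finset.sum_add_distrib, ← Finset.mul_sum, hcol]
          have hsum : ∑ x, (if x = τ ∧ y = σ then (1:ℝ) else 0)
              = if y = σ then 1 else 0 := by
            by_cases hy : y = σ <;> simp [hy]
          rw [hsum]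
          conv_rhs => rw [mMeas_convex G ha1 σ y]
          rw [← hlamc, ← hlam]
      refine le_trans (Wass_le_cost G hBc) (le_of_eq ?_)
      simp only [hB]
      have expand : ∀ x y : V, (lam * (if x = τ ∧ y = σ then (1:ℝ) else 0)
            + (1 - lam) * A x y) * (G.dist x y : ℝ)
          = lam * ((if x = τ then (if y = σ then (G.dist τ σ : ℝ) else 0) else 0))
            + (1 - lam) * (A x y * (G.dist x y : ℝ)) := by
        intro x y
        by_cases hx : x = τ <;> by_cases hy : y = σ <;>
          simp [hx, hy] <;> try ring
      rw [Finset.sum_congr rfl fun x _ => Finset.sum_congr rfl fun y _ => expand x y]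
      simp only [Finset.sum_add_distrib, ← Finset.mul_sum]
      have hsum1 : (∑ x : V, ∑ y : V,
          (if x = τ then (if y = σ then (G.dist τ σ : ℝ) else 0) else 0)) = 1 := by
        simp [hdist]
      rw [hsum1, mul_one]
    -- now take inf over A
    have h2 : (Wass G (mMeas G b τ) (mMeas G b σ) - lam) / (1 - lam)
        ≤ Wass G (mMeas G a τ) (mMeas G a σ) := by
      apply le_Wass G (coupling_exists G ha0 ha1.le hdτ hdσ)
      intro A hA
      have := hWb A hA
      rw [div_le_iff₀ h1l]
      linarith [this]
    rw [div_le_iff₀ h1l] at h2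
    linarith
  -- conclude
  unfold kappaAlpha
  rw [hdist]
  rw [div_le_div_iff₀ h1a h1b]
  have hgoal : (1 - lam) * (1 - Wass G (mMeas G a τ) (mMeas G a σ))
      ≤ 1 - Wass G (mMeas G b τ) (mMeas G b σ) := by nlinarith [key]
  rw [hlamc] at hgoal
  have := mul_le_mul_of_nonneg_left hgoal h1a.le
  calc (1 - Wass G (mMeas G a τ) (mMeas G a σ) / 1) * (1 - b)
      = (1 - a) * ((1 - b) / (1 - a) * (1 - Wass G (mMeas G a τ) (mMeas G a σ))) := by
        field_simp
    _ ≤ (1 - a) * (1 - Wass G (mMeas G b τ) (mMeas G b σ)) := this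
    _ = (1 - Wass G (mMeas G b τ) (mMeas G b σ) / 1) * (1 - a) := by ring

lemma kappaAlpha_le_two (hconn : G.Connected) {τ σ : V} (hadj : G.Adj τ σ) {a : ℝ}
    (ha0 : 0 ≤ a) (ha1 : a < 1) :
    kappaAlpha G a τ σ / (1 - a) ≤ 2 := by
  have h1a : (0 : ℝ) < 1 - a := by linarith
  have hdτ : 0 < G.degree τ := degree_pos_left G hadj
  have hdσ : 0 < G.degree σ := degree_pos_left G hadj.symm
  have hdist : (G.dist τ σ : ℝ) = 1 := by
    rw [SimpleGraph.dist_eq_one_iff_adj.mpr hadj]; norm_num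
  set f : V → ℝ := fun z => (G.dist z σ : ℝ) with hf
  have hflip : ∀ x y : V, f x - f y ≤ (G.dist x y : ℝ) := by
    intro x y
    have h := hconn.dist_triangle (u := x) (v := y) (w := σ)
    have h' := (Nat.cast_le (α := ℝ)).mpr h
    push_cast at h'
    simp only [hf]
    linarith
  have hW : a - (1 - a) ≤ Wass G (mMeas G a τ) (mMeas G a σ) := by
    apply le_Wass G (coupling_exists G ha0 ha1.le hdτ hdσ)
    intro A hA
    refine le_trans ?_ (duality G hflip hA)
    have hμ : ∑ x, mMeas G a τ x * f x ≥ a := by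
      rw [sum_mMeas_mul]
      have h1 : f τ = 1 := by simp only [hf]; rw [hdist]
      have h2 : 0 ≤ ((1 - a) / (G.degree τ : ℝ)) * ∑ y ∈ G.neighborFinset τ, f y := by
        apply mul_nonneg (div_nonneg (by linarith) (Nat.cast_nonneg _))
        apply Finset.sum_nonneg; intro y _; exact Nat.cast_nonneg _
      rw [h1]; linarith
    have hν : ∑ y, mMeas G a σ y * f y = 1 - a := by
      rw [sum_mMeas_mul]
      have h1 : f σ = 0 := by simp [hf]
      have hone : ∀ y ∈ G.neighborFinset σ, f y = 1 := by
        intro y hy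
        rw [SimpleGraph.mem_neighborFinset] at hy
        simp only [hf]
        rw [SimpleGraph.dist_comm, SimpleGraph.dist_eq_one_iff_adj.mpr hy]
        norm_num
      have h2 : ∑ y ∈ G.neighborFinset σ, f y = (G.degree σ : ℝ) := by
        rw [Finset.sum_congr rfl hone, Finset.sum_const, nsmul_eq_mul, mul_one,
          SimpleGraph.card_neighborFinset_eq_degree]
      rw [h1, h2, mul_zero]
      have : (G.degree σ : ℝ) ≠ 0 := Nat.cast_ne_zero.mpr hdσ.ne'
      field_simp; ring
    linarith
  unfold kappaAlpha
  rw [hdist, div_le_iff₀ h1a]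
  simp only [div_one]
  linarith

end Mono
section Helpers
variable {V : Type*} [Fintype V] [DecidableEq V]

lemma sum_ite_and_pt (P : Prop) [Decidable P] (c : V) (v : ℝ) :
    ∑ y : V, (if P ∧ y = c then v else 0) = if P then v else 0 := by
  by_cases hP : P <;> simp [hP]

lemma sum_ite_and_mem (P : Prop) [Decidable P] (S : Finset V) (v : ℝ) :
    ∑ y : V, (if P ∧ y ∈ S then v else 0) = if P then (S.card : ℝ) * v else 0 := by
  by_cases hP : P <;> simp [hP, Finset.sum_ite_mem, mul_comm]

lemma sum_ite_and_pt' (Q : Prop) [Decidable Q] (c : V) (v : ℝ) :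
    ∑ x : V, (if x = c ∧ Q then v else 0) = if Q then v else 0 := by
  by_cases hQ : Q <;> simp [hQ]

lemma sum_ite_and_mem' (Q : Prop) [Decidable Q] (S : Finset V) (v : ℝ) :
    ∑ x : V, (if x ∈ S ∧ Q then v else 0) = if Q then (S.card : ℝ) * v else 0 := by
  by_cases hQ : Q <;> simp [hQ, Finset.sum_ite_mem, mul_comm]

variable (G : SimpleGraph V) [DecidableRel G.Adj]

lemma cost_left (P : V → Prop) [DecidablePred P] (c : V → V) (v M : ℝ) (hv : 0 ≤ v)
    (hM : ∀ x, P x → (G.dist x (c x) : ℝ) ≤ M) :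
    ∑ x, ∑ y, (if P x ∧ y = c x then v else 0) * (G.dist x y : ℝ)
      ≤ ∑ x, (if P x then v * M else 0) := by
  refine Finset.sum_le_sum fun x _ => ?_
  have : ∀ y : V, (if P x ∧ y = c x then v else 0) * (G.dist x y : ℝ)
      = if P x then (if y = c x then v * (G.dist x y : ℝ) else 0) else 0 := by
    intro y
    by_cases h1 : P x <;> by_cases h2 : y = c x <;> simp [h1, h2]
  rw [Finset.sum_congr rfl fun y _ => this y]
  by_cases h1 : P x
  · simp only [h1, if_true]
    rw [Finset.sum_ite_eq' Finset.univ (c x) (fun y => v * (G.dist x y : ℝ))]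
    simp only [Finset.mem_univ, if_true]
    exact mul_le_mul_of_nonneg_left (hM x h1) hv
  · simp [h1]

lemma cost_right (S : Finset V) (b : V) (v M : ℝ) (hv : 0 ≤ v)
    (hM : ∀ y ∈ S, (G.dist b y : ℝ) ≤ M) :
    ∑ x, ∑ y, (if x = b ∧ y ∈ S then v else 0) * (G.dist x y : ℝ)
      ≤ (S.card : ℝ) * (v * M) := by
  have key : ∀ x : V, ∑ y, (if x = b ∧ y ∈ S then v else 0) * (G.dist x y : ℝ)
      = if x = b then ∑ y ∈ S, v * (G.dist b y : ℝ) else 0 := by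
    intro x
    by_cases h1 : x = b
    · subst h1
      simp only [true_and, if_true]
      have pt : ∀ y : V, (if y ∈ S then v else 0) * (G.dist x y : ℝ)
          = if y ∈ S then v * (G.dist x y : ℝ) else 0 := by
        intro y; by_cases h2 : y ∈ S <;> simp [h2]
      rw [Finset.sum_congr rfl fun y _ => pt y,
        Finset.sum_ite_mem Finset.univ S (fun y => v * (G.dist x y : ℝ)),
        Finset.univ_inter]
    · simp [h1]
  rw [Finset.sum_congr rfl fun x _ => key x, Finset.sum_ite_eq' Finset.univ b]
  simp only [Finset.mem_univ, if_true]
  calc ∑ y ∈ S, v * (G.dist b y : ℝ) ≤ ∑ y ∈ S, v * M := by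
        refine Finset.sum_le_sum fun y hy => mul_le_mul_of_nonneg_left (hM y hy) hv
    _ = (S.card : ℝ) * (v * M) := by rw [Finset.sum_const, nsmul_eq_mul]

lemma sum_ite_mem_const (S : Finset V) (v : ℝ) :
    ∑ x : V, (if x ∈ S then v else 0) = (S.card : ℝ) * v := by
  rw [Finset.sum_ite_mem, Finset.univ_inter, Finset.sum_const, nsmul_eq_mul]

lemma sum_ite_pt_const (c : V) (v : ℝ) :
    ∑ x : V, (if x = c then v else 0) = v := by
  rw [Finset.sum_ite_eq' Finset.univ c (fun _ => v)]
  simp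

end Helpers
set_option maxHeartbeats 2000000 in
theorem stmt0
    {V : Type*} [Fintype V] [DecidableEq V]
    (G : SimpleGraph V) [DecidableRel G.Adj]
    (hconn : G.Connected) (hcard : 1 < Fintype.card V)
    (τ σ : V) (hadj : G.Adj τ σ)
    (Sτ Tτ Sσ Tσ : Finset V) (φ : V → V)
    (hNτ : G.neighborFinset τ = insert σ (Sτ ∪ Tτ))
    (hNσ : G.neighborFinset σ = insert τ (Sσ ∪ Tσ))
    (hσnot : σ ∉ Sτ ∪ Tτ) (hτnot : τ ∉ Sσ ∪ Tσ)
    (hdisjτ : Disjoint Sτ Tτ) (hdisjσ : Disjoint Sσ Tσ)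
    (hφ : Set.BijOn φ ↑Tτ ↑Tσ)
    (hφadj : ∀ t ∈ Tτ, G.Adj t (φ t)) :
    (((2 : ℝ) - (Sτ.card : ℝ) - (Sσ.card : ℝ)) / max (G.degree τ : ℝ) (G.degree σ : ℝ)
      + 2 * (1 / min (G.degree τ : ℝ) (G.degree σ : ℝ)
              - 1 / max (G.degree τ : ℝ) (G.degree σ : ℝ))
      + min (G.degree τ : ℝ) (G.degree σ : ℝ) / max (G.degree τ : ℝ) (G.degree σ : ℝ) - 1) ≤ kappa G τ σ := by
  classical
  set Bexpr : ℝ :=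
    (((2 : ℝ) - (Sτ.card : ℝ) - (Sσ.card : ℝ)) / max (G.degree τ : ℝ) (G.degree σ : ℝ)
      + 2 * (1 / min (G.degree τ : ℝ) (G.degree σ : ℝ)
              - 1 / max (G.degree τ : ℝ) (G.degree σ : ℝ))
      + min (G.degree τ : ℝ) (G.degree σ : ℝ) / max (G.degree τ : ℝ) (G.degree σ : ℝ) - 1)
    with hBexpr
  have hτσ : τ ≠ σ := hadj.ne
  have hdτ0 : 0 < G.degree τ := degree_pos_left G hadj
  have hdσ0 : 0 < G.degree σ := degree_pos_left G hadj.symm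
  have hdist : (G.dist τ σ : ℝ) = 1 := by
    rw [SimpleGraph.dist_eq_one_iff_adj.mpr hadj]; norm_num
  -- basic membership facts
  have hσSτ : σ ∉ Sτ := fun h => hσnot (Finset.mem_union_left _ h)
  have hσTτ : σ ∉ Tτ := fun h => hσnot (Finset.mem_union_right _ h)
  have hτSσ : τ ∉ Sσ := fun h => hτnot (Finset.mem_union_left _ h)
  have hτTσ : τ ∉ Tσ := fun h => hτnot (Finset.mem_union_right _ h)
  have hadjSτ : ∀ s ∈ Sτ, G.Adj τ s := by
    intro s hs
    have : s ∈ G.neighborFinset τ := by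
      rw [hNτ]; exact Finset.mem_insert_of_mem (Finset.mem_union_left _ hs)
    rwa [SimpleGraph.mem_neighborFinset] at this
  have hadjTτ : ∀ t ∈ Tτ, G.Adj τ t := by
    intro t ht
    have : t ∈ G.neighborFinset τ := by
      rw [hNτ]; exact Finset.mem_insert_of_mem (Finset.mem_union_right _ ht)
    rwa [SimpleGraph.mem_neighborFinset] at this
  have hadjSσ : ∀ s ∈ Sσ, G.Adj σ s := by
    intro s hs
    have : s ∈ G.neighborFinset σ := by
      rw [hNσ]; exact Finset.mem_insert_of_mem (Finset.mem_union_left _ hs)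
    rwa [SimpleGraph.mem_neighborFinset] at this
  have hadjTσ : ∀ t ∈ Tσ, G.Adj σ t := by
    intro t ht
    have : t ∈ G.neighborFinset σ := by
      rw [hNσ]; exact Finset.mem_insert_of_mem (Finset.mem_union_right _ ht)
    rwa [SimpleGraph.mem_neighborFinset] at this
  have hτSτ : τ ∉ Sτ := fun h => G.irrefl (hadjSτ τ h)
  have hτTτ : τ ∉ Tτ := fun h => G.irrefl (hadjTτ τ h)
  have hσSσ : σ ∉ Sσ := fun h => G.irrefl (hadjSσ σ h)
  have hσTσ : σ ∉ Tσ := fun h => G.irrefl (hadjTσ σ h)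
  -- cards
  have hTcard : Tσ.card = Tτ.card := by
    have himg : Tτ.image φ = Tσ := by
      apply Finset.coe_injective
      rw [Finset.coe_image]
      exact hφ.image_eq
    rw [← himg, Finset.card_image_of_injOn (by exact_mod_cast hφ.injOn)]
  have hdτcard : G.degree τ = 1 + (Sτ.card + Tτ.card) := by
    rw [← SimpleGraph.card_neighborFinset_eq_degree, hNτ,
      Finset.card_insert_of_notMem hσnot, Finset.card_union_of_disjoint hdisjτ]
    omega
  have hdσcard : G.degree σ = 1 + (Sσ.card + Tτ.card) := by
    rw [← SimpleGraph.card_neighborFinset_eq_degree, hNσ,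
      Finset.card_insert_of_notMem hτnot, Finset.card_union_of_disjoint hdisjσ, hTcard]
    omega
  have hdτR : (G.degree τ : ℝ) = 1 + (Sτ.card : ℝ) + (Tτ.card : ℝ) := by
    rw [hdτcard]; push_cast; ring
  have hdσR : (G.degree σ : ℝ) = 1 + (Sσ.card : ℝ) + (Tτ.card : ℝ) := by
    rw [hdσcard]; push_cast; ring
  have hdτRpos : (0:ℝ) < (G.degree τ : ℝ) := by exact_mod_cast hdτ0
  have hdσRpos : (0:ℝ) < (G.degree σ : ℝ) := by exact_mod_cast hdσ0
  -- masses
  set p : ℝ := (1/4) / (G.degree τ : ℝ) with hp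
  set q : ℝ := (1/4) / (G.degree σ : ℝ) with hq
  set pq : ℝ := min p q with hpqdef
  have hp0 : 0 ≤ p := by rw [hp]; positivity
  have hq0 : 0 ≤ q := by rw [hq]; positivity
  have hpq0 : 0 ≤ pq := le_min hp0 hq0
  have hpqp : pq ≤ p := min_le_left _ _
  have hpqq : pq ≤ q := min_le_right _ _
  have hqsum : q * (1 + (Sσ.card : ℝ) + (Tτ.card : ℝ)) = 1/4 := by
    rw [hq, ← hdσR]; field_simp
  have hpsum : p * (1 + (Sτ.card : ℝ) + (Tτ.card : ℝ)) = 1/4 := by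
    rw [hp, ← hdτR]; field_simp
  have hTcardR : ((Tσ.card : ℕ) : ℝ) = ((Tτ.card : ℕ) : ℝ) := by exact_mod_cast hTcard
  set r : ℝ := 3/4 - q * (1 + (Sσ.card : ℝ)) - (Tτ.card : ℝ) * (q - pq) with hr
  have hmm0 : (0:ℝ) ≤ (Tτ.card : ℝ) := Nat.cast_nonneg _
  have hrval : r = 1/2 + (Tτ.card : ℝ) * pq := by
    rw [hr]; linear_combination (-1 : ℝ) * hqsum
  have hr0 : 0 ≤ r := by
    rw [hrval]; nlinarith [mul_nonneg hmm0 hpq0]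
  -- distance facts
  have hrad_τ : ∀ x, G.Adj τ x → (G.dist x σ : ℝ) ≤ 2 := by
    intro x hx
    have h1 := hconn.dist_triangle (u := x) (v := τ) (w := σ)
    have h2 : G.dist x τ = 1 := SimpleGraph.dist_eq_one_iff_adj.mpr hx.symm
    have h3 : G.dist τ σ = 1 := SimpleGraph.dist_eq_one_iff_adj.mpr hadj
    have : G.dist x σ ≤ 2 := by omega
    exact_mod_cast this
  have hrad_σ : ∀ y, G.Adj σ y → (G.dist τ y : ℝ) ≤ 2 := by
    intro y hy
    have h1 := hconn.dist_triangle (u := τ) (v := σ) (w := y)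
    have h2 : G.dist σ y = 1 := SimpleGraph.dist_eq_one_iff_adj.mpr hy
    have h3 : G.dist τ σ = 1 := SimpleGraph.dist_eq_one_iff_adj.mpr hadj
    have : G.dist τ y ≤ 2 := by omega
    exact_mod_cast this
  -- the coupling
  set A : V → V → ℝ := fun x y =>
    (if x = τ ∧ y = τ then q else 0)
    + (if x = σ ∧ y = σ then p else 0)
    + (if x = τ ∧ y = σ then r else 0)
    + (if x ∈ Sτ ∧ y = σ then p else 0)
    + (if x = τ ∧ y ∈ Sσ then q else 0)
    + (if x ∈ Tτ ∧ y = φ x then pq else 0)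
    + (if x ∈ Tτ ∧ y = σ then p - pq else 0)
    + (if x = τ ∧ y ∈ Tσ then q - pq else 0)
    with hA
  have hite0 : ∀ (c : Prop) [Decidable c] (v : ℝ), 0 ≤ v → 0 ≤ (if c then v else 0) := by
    intro c _ v hv; split_ifs <;> [exact hv; exact le_rfl]
  have hApos : ∀ x y, 0 ≤ A x y := by
    intro x y
    simp only [hA]
    repeat' apply add_nonneg
    · exact hite0 _ _ hq0
    · exact hite0 _ _ hp0
    · exact hite0 _ _ hr0
    · exact hite0 _ _ hp0
    · exact hite0 _ _ hq0
    · exact hite0 _ _ hpq0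
    · exact hite0 _ _ (by linarith)
    · exact hite0 _ _ (by linarith)
  -- row sums
  have hrow : ∀ x, ∑ y, A x y = mMeas G (3/4) τ x := by
    intro x
    simp only [hA, Finset.sum_add_distrib, sum_ite_and_pt, sum_ite_and_mem]
    by_cases hx1 : x = τ
    · have e1 : x ≠ σ := by rw [hx1]; exact hτσ
      have e2 : x ∉ Sτ := by rw [hx1]; exact hτSτ
      have e3 : x ∉ Tτ := by rw [hx1]; exact hτTτ
      have hm : mMeas G (3/4) τ x = 3/4 := by rw [hx1]; simp [mMeas]
      rw [hm, if_pos hx1, if_neg e1, if_pos hx1, if_neg e2, if_pos hx1, if_neg e3,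
        if_neg e3, if_pos hx1, hr, hTcardR]
      ring
    · by_cases hx2 : x = σ
      · have e1 : x ≠ τ := hx1
        have e2 : x ∉ Sτ := by rw [hx2]; exact hσSτ
        have e3 : x ∉ Tτ := by rw [hx2]; exact hσTτ
        have hm : mMeas G (3/4) τ x = p := by
          rw [hx2]
          simp only [mMeas, if_neg (Ne.symm hτσ), if_pos hadj, hp]
          norm_num
        rw [hm, if_neg e1, if_pos hx2, if_neg e1, if_neg e2, if_neg e1, if_neg e3,
          if_neg e3, if_neg e1]
        ring
      · by_cases hx3 : x ∈ Sτ
        · have e3 : x ∉ Tτ := fun h => (Finset.disjoint_left.mp hdisjτ hx3) h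
          have hm : mMeas G (3/4) τ x = p := by
            simp only [mMeas, if_neg hx1, if_pos (hadjSτ x hx3), hp]
            norm_num
          rw [hm, if_neg hx1, if_neg hx2, if_neg hx1, if_pos hx3, if_neg hx1, if_neg e3,
            if_neg e3, if_neg hx1]
          ring
        · by_cases hx4 : x ∈ Tτ
          · have hm : mMeas G (3/4) τ x = p := by
              simp only [mMeas, if_neg hx1, if_pos (hadjTτ x hx4), hp]
              norm_num
            rw [hm, if_neg hx1, if_neg hx2, if_neg hx1, if_neg hx3, if_neg hx1, if_pos hx4,
              if_pos hx4, if_neg hx1]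
            ring
          · have hnadj : ¬ G.Adj τ x := by
              intro h
              have hmem : x ∈ G.neighborFinset τ := (SimpleGraph.mem_neighborFinset G τ x).mpr h
              rw [hNτ, Finset.mem_insert, Finset.mem_union] at hmem
              rcases hmem with h' | h' | h'
              · exact hx2 h'
              · exact hx3 h'
              · exact hx4 h'
            have hm : mMeas G (3/4) τ x = 0 := by
              simp only [mMeas, if_neg hx1, if_neg hnadj]
            rw [hm, if_neg hx1, if_neg hx2, if_neg hx1, if_neg hx3, if_neg hx1, if_neg hx4,
              if_neg hx4, if_neg hx1]
            ring
  have hAle1 : ∀ x y, A x y ≤ 1 := by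
    intro x y
    have h1 : A x y ≤ ∑ y', A x y' :=
      Finset.single_le_sum (f := fun y' => A x y') (fun i _ => hApos x i) (Finset.mem_univ y)
    rw [hrow x] at h1
    exact h1.trans (mMeas_le_one G (by norm_num) (by norm_num) τ x)
  -- bijection column sum
  have hφcol : ∀ (y : V) (v : ℝ),
      ∑ x, (if x ∈ Tτ ∧ y = φ x then v else 0) = if y ∈ Tσ then v else 0 := by
    intro y v
    have step1 : ∀ x : V, (if x ∈ Tτ ∧ y = φ x then v else 0)
        = if x ∈ Tτ then (if y = φ x then v else 0) else 0 := by
      intro x; by_cases h : x ∈ Tτ <;> simp [h]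
    rw [Finset.sum_congr rfl fun x _ => step1 x,
      Finset.sum_ite_mem, Finset.univ_inter]
    rw [show (∑ x ∈ Tτ, if y = φ x then v else 0) = ∑ z ∈ Tσ, if y = z then v else 0 from
      Finset.sum_bij (fun x _ => φ x)
        (fun a ha => by exact_mod_cast hφ.mapsTo (by exact_mod_cast ha))
        (fun a₁ ha₁ a₂ ha₂ h => hφ.injOn (by exact_mod_cast ha₁) (by exact_mod_cast ha₂) h)
        (fun b hb => by
          obtain ⟨a, ha, rfl⟩ := hφ.surjOn (by exact_mod_cast hb)
          exact ⟨a, by exact_mod_cast ha, rfl⟩)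
        (fun a ha => rfl)]
    rw [Finset.sum_ite_eq]
  -- column sums
  have hcol : ∀ y, ∑ x, A x y = mMeas G (3/4) σ y := by
    intro y
    simp only [hA, Finset.sum_add_distrib, sum_ite_and_pt', sum_ite_and_mem', hφcol]
    by_cases hy1 : y = σ
    · have e1 : y ≠ τ := by rw [hy1]; exact Ne.symm hτσ
      have e2 : y ∉ Sσ := by rw [hy1]; exact hσSσ
      have e3 : y ∉ Tσ := by rw [hy1]; exact hσTσ
      have hm : mMeas G (3/4) σ y = 3/4 := by rw [hy1]; simp [mMeas]
      rw [hm, if_neg e1, if_pos hy1, if_pos hy1, if_pos hy1, if_neg e2, if_neg e3,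
        if_pos hy1, if_neg e3, hr]
      linear_combination hpsum - hqsum
    · by_cases hy2 : y = τ
      · have e2 : y ∉ Sσ := by rw [hy2]; exact hτSσ
        have e3 : y ∉ Tσ := by rw [hy2]; exact hτTσ
        have hm : mMeas G (3/4) σ y = q := by
          rw [hy2]
          simp only [mMeas, if_neg hτσ, if_pos hadj.symm, hq]
          norm_num
        rw [hm, if_pos hy2, if_neg hy1, if_neg hy1, if_neg hy1, if_neg e2, if_neg e3,
          if_neg hy1, if_neg e3]
        ring
      · by_cases hy3 : y ∈ Sσ
        · have e3 : y ∉ Tσ := fun h => (Finset.disjoint_left.mp hdisjσ hy3) h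
          have hm : mMeas G (3/4) σ y = q := by
            simp only [mMeas, if_neg hy1, if_pos (hadjSσ y hy3), hq]
            norm_num
          rw [hm, if_neg hy2, if_neg hy1, if_neg hy1, if_neg hy1, if_pos hy3, if_neg e3,
            if_neg hy1, if_neg e3]
          ring
        · by_cases hy4 : y ∈ Tσ
          · have hm : mMeas G (3/4) σ y = q := by
              simp only [mMeas, if_neg hy1, if_pos (hadjTσ y hy4), hq]
              norm_num
            rw [hm, if_neg hy2, if_neg hy1, if_neg hy1, if_neg hy1, if_neg hy3, if_pos hy4,
              if_neg hy1, if_pos hy4]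
            ring
          · have hnadj : ¬ G.Adj σ y := by
              intro h
              have hmem : y ∈ G.neighborFinset σ := (SimpleGraph.mem_neighborFinset G σ y).mpr h
              rw [hNσ, Finset.mem_insert, Finset.mem_union] at hmem
              rcases hmem with h' | h' | h'
              · exact hy2 h'
              · exact hy3 h'
              · exact hy4 h'
            have hm : mMeas G (3/4) σ y = 0 := by
              simp only [mMeas, if_neg hy1, if_neg hnadj]
            rw [hm, if_neg hy2, if_neg hy1, if_neg hy1, if_neg hy1, if_neg hy3, if_neg hy4,
              if_neg hy1, if_neg hy4]
            ring
  have hcup : IsCoupling A (mMeas G (3/4) τ) (mMeas G (3/4) σ) :=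
    ⟨fun x y => ⟨hApos x y, hAle1 x y⟩, hrow, hcol⟩
  -- cost bound
  have hexp : ∀ x y, A x y * (G.dist x y : ℝ)
      = (if x = τ ∧ y = τ then q else 0) * (G.dist x y : ℝ)
      + ((if x = σ ∧ y = σ then p else 0) * (G.dist x y : ℝ)
      + ((if x = τ ∧ y = σ then r else 0) * (G.dist x y : ℝ)
      + ((if x ∈ Sτ ∧ y = σ then p else 0) * (G.dist x y : ℝ)
      + ((if x = τ ∧ y ∈ Sσ then q else 0) * (G.dist x y : ℝ)
      + ((if x ∈ Tτ ∧ y = φ x then pq else 0) * (G.dist x y : ℝ)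
      + ((if x ∈ Tτ ∧ y = σ then p - pq else 0) * (G.dist x y : ℝ)
      + (if x = τ ∧ y ∈ Tσ then q - pq else 0) * (G.dist x y : ℝ))))))) := by
    intro x y; simp only [hA]; ring
  have hD1 : ∑ x, ∑ y, (if x = τ ∧ y = τ then q else 0) * (G.dist x y : ℝ) ≤ 0 := by
    refine le_trans (cost_left G (fun x => x = τ) (fun _ => τ) q 0 hq0 ?_) ?_
    · intro x hx; rw [hx]; simp
    · rw [sum_ite_pt_const]; rw [mul_zero]
  have hD2 : ∑ x, ∑ y, (if x = σ ∧ y = σ then p else 0) * (G.dist x y : ℝ) ≤ 0 := by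
    refine le_trans (cost_left G (fun x => x = σ) (fun _ => σ) p 0 hp0 ?_) ?_
    · intro x hx; rw [hx]; simp
    · rw [sum_ite_pt_const]; rw [mul_zero]
  have hD3 : ∑ x, ∑ y, (if x = τ ∧ y = σ then r else 0) * (G.dist x y : ℝ) ≤ r * 1 := by
    refine le_trans (cost_left G (fun x => x = τ) (fun _ => σ) r 1 hr0 ?_) ?_
    · intro x hx; rw [hx, hdist]
    · rw [sum_ite_pt_const]
  have hD4 : ∑ x, ∑ y, (if x ∈ Sτ ∧ y = σ then p else 0) * (G.dist x y : ℝ)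
      ≤ (Sτ.card : ℝ) * (p * 2) := by
    refine le_trans (cost_left G (fun x => x ∈ Sτ) (fun _ => σ) p 2 hp0 ?_) ?_
    · intro x hx; exact hrad_τ x (hadjSτ x hx)
    · rw [sum_ite_mem_const]
  have hD5 : ∑ x, ∑ y, (if x = τ ∧ y ∈ Sσ then q else 0) * (G.dist x y : ℝ)
      ≤ (Sσ.card : ℝ) * (q * 2) :=
    cost_right G Sσ τ q 2 hq0 (fun y hy => hrad_σ y (hadjSσ y hy))
  have hD6 : ∑ x, ∑ y, (if x ∈ Tτ ∧ y = φ x then pq else 0) * (G.dist x y : ℝ)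
      ≤ (Tτ.card : ℝ) * (pq * 1) := by
    refine le_trans (cost_left G (fun x => x ∈ Tτ) φ pq 1 hpq0 ?_) ?_
    · intro x hx
      rw [SimpleGraph.dist_eq_one_iff_adj.mpr (hφadj x hx)]
      norm_num
    · rw [sum_ite_mem_const]
  have hD7 : ∑ x, ∑ y, (if x ∈ Tτ ∧ y = σ then p - pq else 0) * (G.dist x y : ℝ)
      ≤ (Tτ.card : ℝ) * ((p - pq) * 2) := by
    refine le_trans (cost_left G (fun x => x ∈ Tτ) (fun _ => σ) (p - pq) 2
      (by linarith) ?_) ?_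
    · intro x hx; exact hrad_τ x (hadjTτ x hx)
    · rw [sum_ite_mem_const]
  have hD8 : ∑ x, ∑ y, (if x = τ ∧ y ∈ Tσ then q - pq else 0) * (G.dist x y : ℝ)
      ≤ (Tτ.card : ℝ) * ((q - pq) * 2) := by
    refine le_trans (cost_right G Tσ τ (q - pq) 2 (by linarith)
      (fun y hy => hrad_σ y (hadjTσ y hy))) ?_
    rw [hTcardR]
  have hcost : ∑ x, ∑ y, A x y * (G.dist x y : ℝ)
      ≤ 0 + (0 + (r * 1 + ((Sτ.card : ℝ) * (p * 2) + ((Sσ.card : ℝ) * (q * 2)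
        + ((Tτ.card : ℝ) * (pq * 1) + ((Tτ.card : ℝ) * ((p - pq) * 2)
        + (Tτ.card : ℝ) * ((q - pq) * 2))))))) := by
    rw [Finset.sum_congr rfl fun x _ => Finset.sum_congr rfl fun y _ => hexp x y]
    simp only [Finset.sum_add_distrib]
    exact add_le_add hD1 (add_le_add hD2 (add_le_add hD3 (add_le_add hD4
      (add_le_add hD5 (add_le_add hD6 (add_le_add hD7 hD8))))))
  -- final arithmetic
  have hfinal : (0:ℝ) + (0 + (r * 1 + ((Sτ.card : ℝ) * (p * 2) + ((Sσ.card : ℝ) * (q * 2)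
        + ((Tτ.card : ℝ) * (pq * 1) + ((Tτ.card : ℝ) * ((p - pq) * 2)
        + (Tτ.card : ℝ) * ((q - pq) * 2)))))))
      ≤ 1 - (1 - 3/4) * Bexpr := by
    have h1 : (0:ℝ) < 1 + (Sτ.card : ℝ) + (Tτ.card : ℝ) := by
      have := Nat.cast_nonneg (α := ℝ) Sτ.card
      linarith
    have h2 : (0:ℝ) < 1 + (Sσ.card : ℝ) + (Tτ.card : ℝ) := by
      have := Nat.cast_nonneg (α := ℝ) Sσ.card
      linarith
    have h1' : (1 + (Sτ.card : ℝ) + (Tτ.card : ℝ)) ≠ 0 := h1.ne'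
    have h2' : (1 + (Sσ.card : ℝ) + (Tτ.card : ℝ)) ≠ 0 := h2.ne'
    have hτne : ((G.degree τ : ℝ)) ≠ 0 := hdτRpos.ne'
    have hσne : ((G.degree σ : ℝ)) ≠ 0 := hdσRpos.ne'
    have einvτ : ((G.degree τ : ℝ))⁻¹ = 4 * p := by
      rw [hp]; field_simp
    have einvσ : ((G.degree σ : ℝ))⁻¹ = 4 * q := by
      rw [hq]; field_simp
    rcases le_total (G.degree τ : ℝ) (G.degree σ : ℝ) with hle | hle
    · have hqp : q ≤ p := by
        rw [hp, hq, div_le_div_iff₀ hdσRpos hdτRpos]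
        nlinarith [hle]
      apply le_of_eq
      rw [hBexpr, min_eq_left hle, max_eq_right hle, hr, hpqdef, min_eq_right hqp]
      simp only [div_eq_mul_inv]
      rw [einvσ, einvτ, hdτR]
      linear_combination (2:ℝ) * hpsum
    · have hqp : p ≤ q := by
        rw [hp, hq, div_le_div_iff₀ hdτRpos hdσRpos]
        nlinarith [hle]
      apply le_of_eq
      rw [hBexpr, min_eq_right hle, max_eq_left hle, hr, hpqdef, min_eq_left hqp]
      simp only [div_eq_mul_inv]
      rw [einvσ, einvτ, hdσR]
      linear_combination hpsum + hqsum
  have hWle : Wass G (mMeas G (3/4) τ) (mMeas G (3/4) σ) ≤ 1 - (1 - 3/4) * Bexpr :=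
    le_trans (Wass_le_cost G hcup) (le_trans hcost hfinal)
  have hB4 : Bexpr ≤ kappaAlpha G (3/4) τ σ / (1 - 3/4) := by
    unfold kappaAlpha
    rw [hdist, div_one, le_div_iff₀ (by norm_num : (0:ℝ) < 1 - 3/4)]
    linarith
  -- limit assembly
  set g' : ℝ → ℝ := fun α => kappaAlpha G (max α 0) τ σ / (1 - max α 0) with hg'
  have hmono : MonotoneOn g' (Set.Iio (1:ℝ)) := by
    intro a _ b hb hab
    exact kappaAlpha_mono G hadj (le_max_right a 0) (max_le_max hab le_rfl)
      (max_lt (Set.mem_Iio.mp hb) one_pos)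
  have hbdd : BddAbove (g' '' Set.Iio 1) := by
    refine ⟨2, ?_⟩
    rintro _ ⟨α, hα, rfl⟩
    exact kappaAlpha_le_two G hconn hadj (le_max_right _ _)
      (max_lt (Set.mem_Iio.mp hα) one_pos)
  have htend' := hmono.tendsto_nhdsLT hbdd
  have heq : g' =ᶠ[𝓝[<] (1:ℝ)] (fun α => kappaAlpha G α τ σ / (1 - α)) := by
    filter_upwards [Ioo_mem_nhdsLT (by norm_num : (0:ℝ) < 1)] with α hα
    simp only [hg', max_eq_left hα.1.le]
  have htend := htend'.congr' heq
  have hk : kappa G τ σ = sSup (g' '' Set.Iio 1) := by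
    unfold kappa
    exact htend.limUnder_eq
  rw [hk]
  refine le_trans ?_ (le_csSup hbdd ⟨(3/4:ℝ), by norm_num, rfl⟩)
  have hg34 : g' (3/4) = kappaAlpha G (3/4) τ σ / (1 - 3/4) := by
    simp only [hg']
    rw [max_eq_left (by norm_num : (0:ℝ) ≤ 3/4)]
  rw [hg34]
  exact hB4
end

section
/- Assume d_σ ≥ d_τ. Then for every α ∈ [0,1] the Wasserstein distance satisfies W(m_τ^α, m_σ^α) ≥ α + (1−α)·(3 − 2/d_τ − (d_σ + d_τ − n_σ − n_τ)/d_σ). -/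
open Finset Filter Topology

lemma sum_mul_mMeas {V : Type*} [Fintype V] [DecidableEq V] (G : SimpleGraph V)
    [DecidableRel G.Adj] (α : ℝ) (v : V) (g : V → ℝ) :
    ∑ x, g x * mMeas G α v x
      = g v * α + (∑ x ∈ G.neighborFinset v, g x) * ((1 - α) / (G.degree v : ℝ)) := by
  unfold mMeas
  have key : ∀ x, g x * (if x = v then α else if G.Adj v x then (1 - α) / (G.degree v : ℝ) else 0)
      = (if x = v then g x * α else 0)
        + (if G.Adj v x then g x * ((1 - α) / (G.degree v : ℝ)) else 0) := by
    intro x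
    by_cases hx : x = v
    · subst hx; simp
    · simp only [hx, if_false]
      split_ifs <;> simp
  simp only [key]
  rw [Finset.sum_add_distrib, Finset.sum_ite_eq' Finset.univ v (fun x => g x * α)]
  simp only [Finset.mem_univ, if_true]
  congr 1
  rw [← Finset.sum_filter, Finset.sum_mul]
  apply Finset.sum_congr _ (fun _ _ => rfl)
  ext x
  simp [SimpleGraph.mem_neighborFinset]

lemma mMeas_nonneg_s5 {V : Type*} [Fintype V] [DecidableEq V] (G : SimpleGraph V)
    [DecidableRel G.Adj] (α : ℝ) (hα : α ∈ Set.Icc (0:ℝ) 1) (v z : V) :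
    0 ≤ mMeas G α v z := by
  unfold mMeas
  obtain ⟨h0, h1⟩ := hα
  split_ifs with h h'
  · exact h0
  · apply div_nonneg (by linarith) (Nat.cast_nonneg _)
  · exact le_refl 0

lemma mMeas_le_one_s5 {V : Type*} [Fintype V] [DecidableEq V] (G : SimpleGraph V)
    [DecidableRel G.Adj] (α : ℝ) (hα : α ∈ Set.Icc (0:ℝ) 1) (v z : V) :
    mMeas G α v z ≤ 1 := by
  unfold mMeas
  obtain ⟨h0, h1⟩ := hα
  split_ifs with h h'
  · exact h1
  · have hd : (1:ℝ) ≤ (G.degree v : ℝ) := by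
      have : 0 < G.degree v := by
        rw [← SimpleGraph.card_neighborFinset_eq_degree]
        exact Finset.card_pos.mpr ⟨z, (SimpleGraph.mem_neighborFinset G v z).mpr h'⟩
      exact_mod_cast this
    rw [div_le_one (by linarith)]
    linarith
  · norm_num

lemma sum_mMeas_s5 {V : Type*} [Fintype V] [DecidableEq V] (G : SimpleGraph V)
    [DecidableRel G.Adj] (α : ℝ) (v : V) (hv : 0 < G.degree v) :
    ∑ x, mMeas G α v x = 1 := by
  have := sum_mul_mMeas G α v (fun _ => 1)
  simp only [one_mul] at this
  rw [this, Finset.sum_const, SimpleGraph.card_neighborFinset_eq_degree, nsmul_eq_mul,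
    mul_one]
  have hne : (G.degree v : ℝ) ≠ 0 := by exact_mod_cast hv.ne'
  field_simp
  ring

lemma alg_aux (a nτ nσ m : ℝ) (hnτ : 0 ≤ nτ) (hnσ : 0 ≤ nσ) (hm : 0 ≤ m) :
    a + (1 - a) * (3 - 2 / (1 + nτ + m)
        - ((1 + nσ + m) + (1 + nτ + m) - nσ - nτ) / (1 + nσ + m))
      = a + (2 * nτ + 2 * m) * ((1 - a) / (1 + nτ + m))
        - (1 - nσ + m) * ((1 - a) / (1 + nσ + m)) := by
  have h1 : (1 + nτ + m) ≠ 0 := by positivity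
  have h2 : (1 + nσ + m) ≠ 0 := by positivity
  field_simp
  ring

set_option maxHeartbeats 2000000

theorem stmt5
    {V : Type*} [Fintype V] [DecidableEq V]
    (G : SimpleGraph V) [DecidableRel G.Adj]
    (hconn : G.Connected) (hcard : 1 < Fintype.card V)
    (τ σ : V) (hadj : G.Adj τ σ)
    (Sτ Tτ Sσ Tσ : Finset V) (φ : V → V)
    (hNτ : G.neighborFinset τ = insert σ (Sτ ∪ Tτ))
    (hNσ : G.neighborFinset σ = insert τ (Sσ ∪ Tσ))
    (hσnot : σ ∉ Sτ ∪ Tτ) (hτnot : τ ∉ Sσ ∪ Tσ)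
    (hdisjτ : Disjoint Sτ Tτ) (hdisjσ : Disjoint Sσ Tσ)
    (hφ : Set.BijOn φ ↑Tτ ↑Tσ)
    (hφadj : ∀ t ∈ Tτ, G.Adj t (φ t))
    (hd1 : Disjoint Sτ Sσ) (hd2 : Disjoint Sτ Tσ)
    (hd3 : Disjoint Tτ Sσ) (hd4 : Disjoint Tτ Tσ)
    (hτd : τ ∉ Sτ ∪ Tτ) (hσd : σ ∉ Sσ ∪ Tσ)
    (hnadjσ : ∀ x ∈ Sτ ∪ Tτ, ¬ G.Adj x σ)
    (hnadjτ : ∀ x ∈ Sσ ∪ Tσ, ¬ G.Adj x τ)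
    (hdist1 : ∀ x ∈ Sτ ∪ Tτ, ∀ y ∈ Sσ, 3 ≤ G.dist x y)
    (hdist2 : ∀ x ∈ Sτ, ∀ y ∈ Tσ, 3 ≤ G.dist x y)
    (hd : G.degree τ ≤ G.degree σ)
    (α : ℝ) (hα : α ∈ Set.Icc (0 : ℝ) 1) :
    α + (1 - α) * (3 - 2 / (G.degree τ : ℝ)
        - ((G.degree σ : ℝ) + (G.degree τ : ℝ) - (Sσ.card : ℝ) - (Sτ.card : ℝ))
            / (G.degree σ : ℝ)) ≤
      Wass G (mMeas G α τ) (mMeas G α σ) := by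
  classical
  have hτσ : τ ≠ σ := hadj.ne
  have hdτpos : 0 < G.degree τ := by
    rw [← SimpleGraph.card_neighborFinset_eq_degree]
    exact Finset.card_pos.mpr ⟨σ, (SimpleGraph.mem_neighborFinset G τ σ).mpr hadj⟩
  have hdσpos : 0 < G.degree σ := by
    rw [← SimpleGraph.card_neighborFinset_eq_degree]
    exact Finset.card_pos.mpr ⟨τ, (SimpleGraph.mem_neighborFinset G σ τ).mpr hadj.symm⟩
  set f : V → ℝ := fun z => if z = τ then 1 else if z = σ then 0 else
    if z ∈ Sτ ∪ Tτ then 2 else if z ∈ Sσ then -1 else if z ∈ Tσ then 1 else 0 with hf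
  have fτ : f τ = 1 := by simp [hf]
  have fσ : f σ = 0 := by simp [hf, Ne.symm hτσ]
  have fST : ∀ z ∈ Sτ ∪ Tτ, f z = 2 := by
    intro z hz
    have h1 : z ≠ τ := fun h => hτd (h ▸ hz)
    have h2 : z ≠ σ := fun h => hσnot (h ▸ hz)
    simp only [hf]
    beta_reduce
    rw [if_neg h1, if_neg h2, if_pos hz]
  have fSσ : ∀ z ∈ Sσ, f z = -1 := by
    intro z hz
    have h1 : z ≠ τ := fun h => hτnot (h ▸ Finset.mem_union_left Tσ hz)
    have h2 : z ≠ σ := fun h => hσd (h ▸ Finset.mem_union_left Tσ hz)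
    have h3 : z ∉ Sτ ∪ Tτ := by
      intro hm
      rcases Finset.mem_union.mp hm with h | h
      · exact Finset.disjoint_left.mp hd1 h hz
      · exact Finset.disjoint_left.mp hd3 h hz
    simp only [hf]
    beta_reduce
    rw [if_neg h1, if_neg h2, if_neg h3, if_pos hz]
  have fTσ : ∀ z ∈ Tσ, f z = 1 := by
    intro z hz
    have h1 : z ≠ τ := fun h => hτnot (h ▸ Finset.mem_union_right Sσ hz)
    have h2 : z ≠ σ := fun h => hσd (h ▸ Finset.mem_union_right Sσ hz)
    have h3 : z ∉ Sτ ∪ Tτ := by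
      intro hm
      rcases Finset.mem_union.mp hm with h | h
      · exact Finset.disjoint_left.mp hd2 h hz
      · exact Finset.disjoint_left.mp hd4 h hz
    have h4 : z ∉ Sσ := fun h => Finset.disjoint_right.mp hdisjσ hz h
    simp only [hf]
    beta_reduce
    rw [if_neg h1, if_neg h2, if_neg h3, if_neg h4, if_pos hz]
  have dist0 : ∀ x y : V, (0:ℝ) ≤ (G.dist x y : ℝ) := fun x y => Nat.cast_nonneg _
  have dist1 : ∀ x y : V, x ≠ y → (1:ℝ) ≤ (G.dist x y : ℝ) := by
    intro x y h
    exact_mod_cast hconn.pos_dist_of_ne h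
  have dist2 : ∀ x y : V, x ≠ y → ¬ G.Adj x y → (2:ℝ) ≤ (G.dist x y : ℝ) := by
    intro x y h h2
    have h1 : 1 ≤ G.dist x y := hconn.pos_dist_of_ne h
    have hne1 : G.dist x y ≠ 1 := fun he => h2 (SimpleGraph.dist_eq_one_iff_adj.mp he)
    have : 2 ≤ G.dist x y := by omega
    exact_mod_cast this
  -- Lipschitz property on the supports
  have lip : ∀ x y, (x = τ ∨ G.Adj τ x) → (y = σ ∨ G.Adj σ y) →
      f x - f y ≤ (G.dist x y : ℝ) := by
    intro x y hx hy
    have hx' : x = τ ∨ x = σ ∨ x ∈ Sτ ∪ Tτ := by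
      rcases hx with h | h
      · exact Or.inl h
      · right
        have : x ∈ G.neighborFinset τ := (SimpleGraph.mem_neighborFinset G τ x).mpr h
        rw [hNτ, Finset.mem_insert] at this
        exact this
    have hy' : y = σ ∨ y = τ ∨ y ∈ Sσ ∨ y ∈ Tσ := by
      rcases hy with h | h
      · exact Or.inl h
      · right
        have : y ∈ G.neighborFinset σ := (SimpleGraph.mem_neighborFinset G σ y).mpr h
        rw [hNσ, Finset.mem_insert] at this
        rcases this with h | h
        · exact Or.inl h
        · rcases Finset.mem_union.mp h with h | h
          · exact Or.inr (Or.inl h)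
          · exact Or.inr (Or.inr h)
    rcases hx' with hxe | hxe | hxm
    · rw [hxe]
      rcases hy' with hye | hye | hym | hym
      · rw [hye, fτ, fσ]; linarith [dist1 τ σ hτσ]
      · rw [hye, fτ]; linarith [dist0 τ τ]
      · rw [fτ, fSσ y hym]
        have hne : τ ≠ y := fun h => hτnot (h ▸ Finset.mem_union_left Tσ hym)
        have hna : ¬ G.Adj τ y := fun h => hnadjτ y (Finset.mem_union_left Tσ hym) h.symm
        linarith [dist2 τ y hne hna]
      · rw [fτ, fTσ y hym]; linarith [dist0 τ y]
    · rw [hxe]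
      rcases hy' with hye | hye | hym | hym
      · rw [hye, fσ]; linarith [dist0 σ σ]
      · rw [hye, fσ, fτ]; linarith [dist0 σ τ]
      · rw [fσ, fSσ y hym]
        have hne : σ ≠ y := fun h => hσd (h ▸ Finset.mem_union_left Tσ hym)
        linarith [dist1 σ y hne]
      · rw [fσ, fTσ y hym]; linarith [dist0 σ y]
    · rw [fST x hxm]
      rcases hy' with hye | hye | hym | hym
      · rw [hye, fσ]
        have hne : x ≠ σ := fun h => hσnot (h ▸ hxm)
        linarith [dist2 x σ hne (hnadjσ x hxm)]
      · rw [hye, fτ]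
        have hne : x ≠ τ := fun h => hτd (h ▸ hxm)
        linarith [dist1 x τ hne]
      · rw [fSσ y hym]
        have := hdist1 x hxm y hym
        have : (3:ℝ) ≤ (G.dist x y : ℝ) := by exact_mod_cast this
        linarith
      · rw [fTσ y hym]
        have hne : x ≠ y := by
          rcases Finset.mem_union.mp hxm with h | h
          · exact fun he => Finset.disjoint_left.mp hd2 h (he ▸ hym)
          · exact fun he => Finset.disjoint_left.mp hd4 h (he ▸ hym)
        linarith [dist1 x y hne]
  -- cardinalities and degrees
  have hm : Tτ.card = Tσ.card := by
    apply Finset.card_bij (fun t _ => φ t)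
    · intro a ha
      exact_mod_cast hφ.mapsTo (by exact_mod_cast ha)
    · intro a ha b hb h
      exact hφ.injOn (by exact_mod_cast ha) (by exact_mod_cast hb) h
    · intro b hb
      obtain ⟨a, ha, hab⟩ := hφ.surjOn (by exact_mod_cast hb)
      exact ⟨a, by exact_mod_cast ha, hab⟩
  have hdegτ : (G.degree τ : ℝ) = 1 + (Sτ.card : ℝ) + (Tτ.card : ℝ) := by
    rw [← SimpleGraph.card_neighborFinset_eq_degree, hNτ,
      Finset.card_insert_of_notMem hσnot, Finset.card_union_of_disjoint hdisjτ]
    push_cast; ring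
  have hdegσ : (G.degree σ : ℝ) = 1 + (Sσ.card : ℝ) + (Tτ.card : ℝ) := by
    rw [← SimpleGraph.card_neighborFinset_eq_degree, hNσ,
      Finset.card_insert_of_notMem hτnot, Finset.card_union_of_disjoint hdisjσ, hm]
    push_cast; ring
  -- sums of f against the measures
  have hsumτ : ∑ x ∈ G.neighborFinset τ, f x = 2 * (Sτ.card : ℝ) + 2 * (Tτ.card : ℝ) := by
    rw [hNτ, Finset.sum_insert hσnot, fσ, Finset.sum_union hdisjτ]
    rw [Finset.sum_congr rfl (fun x hx => fST x (Finset.mem_union_left Tτ hx)),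
      Finset.sum_congr rfl (fun x hx => fST x (Finset.mem_union_right Sτ hx))]
    simp [mul_comm]
  have hsumσ : ∑ x ∈ G.neighborFinset σ, f x = 1 - (Sσ.card : ℝ) + (Tτ.card : ℝ) := by
    rw [hNσ, Finset.sum_insert hτnot, fτ, Finset.sum_union hdisjσ]
    rw [Finset.sum_congr rfl (fun x hx => fSσ x hx), Finset.sum_congr rfl (fun x hx => fTσ x hx)]
    simp [hm]
    ring
  have hfμ : ∑ x, f x * mMeas G α τ x
      = α + (2 * (Sτ.card : ℝ) + 2 * (Tτ.card : ℝ)) * ((1 - α) / (G.degree τ : ℝ)) := by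
    rw [sum_mul_mMeas, fτ, hsumτ, one_mul]
  have hfν : ∑ x, f x * mMeas G α σ x
      = (1 - (Sσ.card : ℝ) + (Tτ.card : ℝ)) * ((1 - α) / (G.degree σ : ℝ)) := by
    rw [sum_mul_mMeas, fσ, hsumσ, zero_mul, zero_add]
  -- target value
  have htarget : α + (1 - α) * (3 - 2 / (G.degree τ : ℝ)
        - ((G.degree σ : ℝ) + (G.degree τ : ℝ) - (Sσ.card : ℝ) - (Sτ.card : ℝ))
            / (G.degree σ : ℝ))
      = ∑ x, f x * mMeas G α τ x - ∑ x, f x * mMeas G α σ x := by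
    rw [hfμ, hfν, hdegτ, hdegσ]
    exact alg_aux α _ _ _ (Nat.cast_nonneg _) (Nat.cast_nonneg _) (Nat.cast_nonneg _)
  apply le_csInf
  · refine ⟨_, ⟨fun x y => mMeas G α τ x * mMeas G α σ y, ⟨?_, ?_, ?_⟩, rfl⟩⟩
    · intro x y
      constructor
      · exact mul_nonneg (mMeas_nonneg_s5 G α hα τ x) (mMeas_nonneg_s5 G α hα σ y)
      · exact mul_le_one₀ (mMeas_le_one_s5 G α hα τ x) (mMeas_nonneg_s5 G α hα σ y)
          (mMeas_le_one_s5 G α hα σ y)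
    · intro x
      rw [← Finset.mul_sum, sum_mMeas_s5 G α σ hdσpos, mul_one]
    · intro y
      rw [← Finset.sum_mul, sum_mMeas_s5 G α τ hdτpos, one_mul]
  · rintro c ⟨A, ⟨hA01, hrow, hcol⟩, rfl⟩
    have key : ∀ x y, A x y * (f x - f y) ≤ A x y * (G.dist x y : ℝ) := by
      intro x y
      rcases eq_or_lt_of_le (hA01 x y).1 with h | h
      · rw [← h]; simp
      · apply mul_le_mul_of_nonneg_left _ h.le
        apply lip
        · by_contra hc
          push_neg at hc
          have hμ : mMeas G α τ x = 0 := by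
            unfold mMeas; simp [hc.1, hc.2]
          have hs : ∑ y', A x y' = 0 := by rw [hrow x, hμ]
          have hle : A x y ≤ ∑ y', A x y' :=
            Finset.single_le_sum (fun i _ => (hA01 x i).1) (Finset.mem_univ y)
          linarith
        · by_contra hc
          push_neg at hc
          have hν : mMeas G α σ y = 0 := by
            unfold mMeas; simp [hc.1, hc.2]
          have hs : ∑ x', A x' y = 0 := by rw [hcol y, hν]
          have hle : A x y ≤ ∑ x', A x' y :=
            Finset.single_le_sum (fun i _ => (hA01 i y).1) (Finset.mem_univ x)
          linarith
    have h1 : ∑ x, ∑ y, A x y * (f x - f y) ≤ ∑ x, ∑ y, A x y * (G.dist x y : ℝ) :=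
      Finset.sum_le_sum (fun x _ => Finset.sum_le_sum (fun y _ => key x y))
    have h2 : ∑ x, ∑ y, A x y * (f x - f y)
        = ∑ x, f x * mMeas G α τ x - ∑ x, f x * mMeas G α σ x := by
      have e : ∀ x y : V, A x y * (f x - f y) = A x y * f x - A x y * f y := by
        intro x y; ring
      simp only [e, Finset.sum_sub_distrib]
      congr 1
      · apply Finset.sum_congr rfl
        intro x _
        rw [← Finset.sum_mul, hrow x]
        ring
      · rw [Finset.sum_comm]
        apply Finset.sum_congr rfl
        intro y _
        rw [← Finset.sum_mul, hcol y]
        ring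
    rw [htarget, ← h2]
    exact h1
end

section
/- For every α ∈ [0,1] and every pair of distinct vertices x, y of G, the α-Ricci curvature satisfies κ_α(x,y) ≤ (1−α)·2/d(x,y). -/
open Finset Filter Topology

section Aux
variable {V : Type*} [Fintype V] [DecidableEq V] (G : SimpleGraph V) [DecidableRel G.Adj]

lemma aux_degree_pos (hconn : G.Connected) (hcard : 1 < Fintype.card V) (x : V) :
    0 < G.degree x := by
  rw [SimpleGraph.degree_pos_iff_exists_adj]
  obtain ⟨z, hz⟩ := Fintype.exists_ne_of_one_lt_card hcard x
  have ⟨p⟩ := hconn x z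
  cases p with
  | nil => exact absurd rfl hz.symm
  | cons h _ => exact ⟨_, h⟩

lemma aux_mMeas_nonneg {α : ℝ} (hα : α ∈ Set.Icc (0:ℝ) 1) (x z : V) :
    0 ≤ mMeas G α x z := by
  unfold mMeas
  split_ifs with h1 h2
  · exact hα.1
  · exact div_nonneg (by linarith [hα.2]) (Nat.cast_nonneg _)
  · exact le_refl _

lemma aux_mMeas_le_one {α : ℝ} (hα : α ∈ Set.Icc (0:ℝ) 1) {x : V}
    (hd : 0 < G.degree x) (z : V) : mMeas G α x z ≤ 1 := by
  unfold mMeas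
  have h1 : (1 : ℝ) ≤ (G.degree x : ℝ) := by exact_mod_cast hd
  split_ifs with hz h2
  · exact hα.2
  · rw [div_le_one (by linarith)]
    linarith [hα.1]
  · norm_num

lemma aux_sum_mMeas {α : ℝ} {x : V} (hd : 0 < G.degree x) :
    ∑ z, mMeas G α x z = 1 := by
  have hdd : (G.degree x : ℝ) ≠ 0 := by positivity
  have : ∀ z, mMeas G α x z =
      (if z = x then α else 0) + (if G.Adj x z then (1 - α) / (G.degree x : ℝ) else 0) := by
    intro z
    unfold mMeas
    by_cases hz : z = x
    · subst hz; simp [G.irrefl]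
    · simp [hz]
  rw [Finset.sum_congr rfl fun z _ => this z, Finset.sum_add_distrib,
    Finset.sum_ite_eq' Finset.univ x (fun _ => α)]
  have h2 : ∑ z, (if G.Adj x z then (1 - α) / (G.degree x : ℝ) else 0)
      = (G.degree x : ℝ) * ((1 - α) / (G.degree x : ℝ)) := by
    rw [Finset.sum_ite, Finset.sum_const_zero, Finset.sum_const, add_zero]
    have : (Finset.univ.filter (G.Adj x)).card = G.degree x := by
      congr 1
      ext z
      simp [SimpleGraph.mem_neighborFinset]
    rw [this]
    push_cast
    ring
  rw [h2]
  field_simp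
  simp only [Finset.mem_univ, if_true]
  ring

lemma aux_sum_mMeas_dist {α : ℝ} {x : V} (hd : 0 < G.degree x) :
    ∑ z, mMeas G α x z * (G.dist x z : ℝ) = 1 - α := by
  have hdd : (G.degree x : ℝ) ≠ 0 := by positivity
  have : ∀ z, mMeas G α x z * (G.dist x z : ℝ)
      = (if G.Adj x z then (1 - α) / (G.degree x : ℝ) else 0) := by
    intro z
    unfold mMeas
    by_cases hz : z = x
    · subst hz; simp [G.irrefl]
    · by_cases ha : G.Adj x z
      · have : G.dist x z = 1 := SimpleGraph.dist_eq_one_iff_adj.mpr ha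
        simp [hz, ha, this]
      · simp [hz, ha]
  rw [Finset.sum_congr rfl fun z _ => this z]
  rw [Finset.sum_ite, Finset.sum_const_zero, Finset.sum_const, add_zero]
  have hc : (Finset.univ.filter (G.Adj x)).card = G.degree x := by
    congr 1
    ext z
    simp [SimpleGraph.mem_neighborFinset]
  rw [hc]
  rw [nsmul_eq_mul]
  field_simp

end Aux

theorem stmt8 {V : Type*} [Fintype V] [DecidableEq V]
    (G : SimpleGraph V) [DecidableRel G.Adj]
    (hconn : G.Connected) (hcard : 1 < Fintype.card V)
    (α : ℝ) (hα : α ∈ Set.Icc (0 : ℝ) 1) (x y : V) (hxy : x ≠ y) :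
    kappaAlpha G α x y ≤ (1 - α) * (2 / (G.dist x y : ℝ)) := by
  set μ := mMeas G α x with hμ
  set ν := mMeas G α y with hν
  have hdx := aux_degree_pos G hconn hcard x
  have hdy := aux_degree_pos G hconn hcard y
  have hDpos : 0 < (G.dist x y : ℝ) := by
    exact_mod_cast hconn.pos_dist_of_ne hxy
  set D : ℝ := (G.dist x y : ℝ) with hD
  set S := {c | ∃ A : V → V → ℝ, IsCoupling A μ ν ∧
      c = ∑ u, ∑ v, A u v * (G.dist u v : ℝ)} with hS
  have hμsum : ∑ u, μ u = 1 := aux_sum_mMeas G hdx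
  have hνsum : ∑ v, ν v = 1 := aux_sum_mMeas G hdy
  -- key lower bound on any coupling cost
  have key : ∀ c ∈ S, D - 2 * (1 - α) ≤ c := by
    rintro c ⟨A, ⟨hA01, hrow, hcol⟩, rfl⟩
    have hstep : ∀ u v, A u v * (D - (G.dist x u : ℝ) - (G.dist v y : ℝ))
        ≤ A u v * (G.dist u v : ℝ) := by
      intro u v
      apply mul_le_mul_of_nonneg_left _ (hA01 u v).1
      have h3 : G.dist x y ≤ G.dist x u + G.dist u v + G.dist v y := by
        have h1 := hconn.dist_triangle (u := x) (v := u) (w := v)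
        have h2 := hconn.dist_triangle (u := x) (v := v) (w := y)
        omega
      have : (G.dist x y : ℝ) ≤ (G.dist x u : ℝ) + (G.dist u v : ℝ) + (G.dist v y : ℝ) := by
        exact_mod_cast h3
      linarith
    refine le_trans (le_of_eq ?_) (Finset.sum_le_sum fun u _ =>
      Finset.sum_le_sum fun v _ => hstep u v)
    have inner : ∀ u, ∑ v, A u v * (D - (G.dist x u : ℝ) - (G.dist v y : ℝ))
        = μ u * (D - (G.dist x u : ℝ)) - ∑ v, A u v * (G.dist v y : ℝ) := by
      intro u
      have : ∀ v, A u v * (D - (G.dist x u : ℝ) - (G.dist v y : ℝ))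
          = A u v * (D - (G.dist x u : ℝ)) - A u v * (G.dist v y : ℝ) := fun v => by ring
      rw [Finset.sum_congr rfl fun v _ => this v, Finset.sum_sub_distrib,
        ← Finset.sum_mul, hrow u]
    rw [Finset.sum_congr rfl fun u _ => inner u, Finset.sum_sub_distrib]
    have t1 : ∑ u, μ u * (D - (G.dist x u : ℝ)) = D - (1 - α) := by
      have : ∀ u, μ u * (D - (G.dist x u : ℝ)) = μ u * D - μ u * (G.dist x u : ℝ) :=
        fun u => by ring
      rw [Finset.sum_congr rfl fun u _ => this u, Finset.sum_sub_distrib,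
        ← Finset.sum_mul, hμsum, aux_sum_mMeas_dist G hdx]
      ring
    have t2 : ∑ u, ∑ v, A u v * (G.dist v y : ℝ) = 1 - α := by
      rw [Finset.sum_comm]
      have : ∀ v, ∑ u, A u v * (G.dist v y : ℝ) = ν v * (G.dist v y : ℝ) := by
        intro v
        rw [← Finset.sum_mul, hcol v]
      rw [Finset.sum_congr rfl fun v _ => this v]
      have : ∀ v, ν v * (G.dist v y : ℝ) = ν v * (G.dist y v : ℝ) := by
        intro v; rw [SimpleGraph.dist_comm]
      rw [Finset.sum_congr rfl fun v _ => this v]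
      exact aux_sum_mMeas_dist G hdy
    rw [t1, t2]
    ring
  have hne : S.Nonempty := by
    refine ⟨∑ u, ∑ v, (μ u * ν v) * (G.dist u v : ℝ), fun u v => μ u * ν v, ⟨?_, ?_, ?_⟩, rfl⟩
    · intro u v
      constructor
      · exact mul_nonneg (aux_mMeas_nonneg G hα x u) (aux_mMeas_nonneg G hα y v)
      · exact mul_le_one₀ (aux_mMeas_le_one G hα hdx u) (aux_mMeas_nonneg G hα y v)
          (aux_mMeas_le_one G hα hdy v)
    · intro u
      rw [← Finset.mul_sum, hνsum, mul_one]
    · intro v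
      have : ∀ u, μ u * ν v = ν v * μ u := fun u => by ring
      rw [Finset.sum_congr rfl fun u _ => this u, ← Finset.mul_sum, hμsum, mul_one]
  have hW : D - 2 * (1 - α) ≤ Wass G μ ν := le_csInf hne key
  have : kappaAlpha G α x y = 1 - Wass G μ ν / D := rfl
  rw [this]
  have h1 : (D - 2 * (1 - α)) / D ≤ Wass G μ ν / D :=
    div_le_div_of_nonneg_right hW hDpos.le
  have h2 : (D - 2 * (1 - α)) / D = 1 - (1 - α) * (2 / D) := by
    field_simp
  linarith [h1, h2.symm.le]
end

section
/- Let κ₀ be a real number. If κ(x,y) ≥ κ₀ for every pair of adjacent vertices x, y of G, then κ(x,y) ≥ κ₀ for every pair of distinct vertices x, y of G. -/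
open Finset Filter Topology

namespace LLYAux
open SimpleGraph
set_option linter.unusedSectionVars false

section Basic
variable {V : Type*} [Fintype V] (G : SimpleGraph V)

/-- cost of a transport plan -/
noncomputable def cost (A : V → V → ℝ) : ℝ := ∑ x, ∑ y, A x y * (G.dist x y : ℝ)

/-- probability mass function -/
def Prob (μ : V → ℝ) : Prop := (∀ x, 0 ≤ μ x) ∧ ∑ x, μ x = 1

variable {G}

lemma Prob.le_one {μ : V → ℝ} (h : Prob μ) (x : V) : μ x ≤ 1 := by
  rw [← h.2]
  exact Finset.single_le_sum (fun i _ => h.1 i) (mem_univ x)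

lemma cost_nonneg {A : V → V → ℝ} (hA : ∀ x y, 0 ≤ A x y) : 0 ≤ cost G A :=
  Finset.sum_nonneg fun x _ => Finset.sum_nonneg fun y _ =>
    mul_nonneg (hA x y) (Nat.cast_nonneg _)

lemma wassSet_bddBelow (μ ν : V → ℝ) :
    BddBelow {c | ∃ A : V → V → ℝ, IsCoupling A μ ν ∧ c = cost G A} := by
  refine ⟨0, fun c hc => ?_⟩
  obtain ⟨A, hA, rfl⟩ := hc
  exact cost_nonneg fun x y => (hA.1 x y).1

lemma wass_le_cost {μ ν : V → ℝ} {A : V → V → ℝ} (hA : IsCoupling A μ ν) :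
    Wass G μ ν ≤ cost G A :=
  csInf_le (wassSet_bddBelow μ ν) ⟨A, hA, rfl⟩

lemma prodCoupling {μ ν : V → ℝ} (hμ : Prob μ) (hν : Prob ν) :
    IsCoupling (fun x y => μ x * ν y) μ ν := by
  refine ⟨fun x y => ⟨mul_nonneg (hμ.1 x) (hν.1 y),
    mul_le_one₀ (hμ.le_one x) (hν.1 y) (hν.le_one y)⟩, fun x => ?_, fun y => ?_⟩
  · rw [← Finset.mul_sum, hν.2, mul_one]
  · rw [← Finset.sum_mul, hμ.2, one_mul]

lemma exists_coupling_cost_lt {μ ν : V → ℝ} (hμ : Prob μ) (hν : Prob ν)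
    {ε : ℝ} (hε : 0 < ε) :
    ∃ A : V → V → ℝ, IsCoupling A μ ν ∧ cost G A < Wass G μ ν + ε := by
  have hne : {c | ∃ A : V → V → ℝ, IsCoupling A μ ν ∧ c = cost G A}.Nonempty :=
    ⟨_, _, prodCoupling hμ hν, rfl⟩
  have hlt : Wass G μ ν < Wass G μ ν + ε := by linarith
  obtain ⟨c, ⟨A, hA, rfl⟩, hc⟩ := exists_lt_of_csInf_lt hne hlt
  exact ⟨A, hA, hc⟩

lemma coupling_total {μ ν : V → ℝ} {A : V → V → ℝ} (hA : IsCoupling A μ ν)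
    (hμ : Prob μ) : ∑ x, ∑ y, A x y = 1 := by
  simp_rw [hA.2.1]; exact hμ.2

lemma glue (hconn : G.Connected) {μ ν ρ : V → ℝ} {A B : V → V → ℝ}
    (hμ1 : ∀ x, μ x ≤ 1) (hA : IsCoupling A μ ν) (hB : IsCoupling B ν ρ) :
    ∃ C : V → V → ℝ, IsCoupling C μ ρ ∧ cost G C ≤ cost G A + cost G B := by
  classical
  set t : V → V → V → ℝ :=
    fun x y z => if ν y = 0 then 0 else A x y * B y z / ν y with ht
  have hν : ∀ y, 0 ≤ ν y := by
    intro y; rw [← hA.2.2 y]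
    exact Finset.sum_nonneg fun i _ => (hA.1 i y).1
  have hA0 : ∀ x y, ν y = 0 → A x y = 0 := by
    intro x y hy
    have h := hA.2.2 y
    rw [hy] at h
    exact (Finset.sum_eq_zero_iff_of_nonneg fun i _ => (hA.1 i y).1).mp h x (mem_univ x)
  have ht_nonneg : ∀ x y z, 0 ≤ t x y z := by
    intro x y z
    simp only [ht]
    split
    · exact le_refl 0
    · next hy =>
      have h1 : 0 < ν y := lt_of_le_of_ne (hν y) (Ne.symm hy)
      have := (hA.1 x y).1
      have := (hB.1 y z).1
      positivity
  have ht_sum_z : ∀ x y, ∑ z, t x y z = A x y := by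
    intro x y
    by_cases hy : ν y = 0
    · simp only [ht, if_pos hy, Finset.sum_const_zero]
      exact (hA0 x y hy).symm
    · simp only [ht, if_neg hy]
      rw [← Finset.sum_div, ← Finset.mul_sum, hB.2.1, mul_div_assoc,
        div_self hy, mul_one]
  have ht_sum_x : ∀ y z, ∑ x, t x y z = B y z := by
    intro y z
    by_cases hy : ν y = 0
    · simp only [ht, if_pos hy, Finset.sum_const_zero]
      have h := hB.2.1 y
      rw [hy] at h
      exact ((Finset.sum_eq_zero_iff_of_nonneg fun i _ => (hB.1 y i).1).mp h z
        (mem_univ z)).symm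
    · simp only [ht, if_neg hy]
      rw [← Finset.sum_div, ← Finset.sum_mul, hA.2.2, mul_comm, mul_div_assoc,
        div_self hy, mul_one]
  have ht_le : ∀ x y z, t x y z ≤ A x y := by
    intro x y z
    by_cases hy : ν y = 0
    · simp only [ht, if_pos hy]
      exact (hA.1 x y).1
    · simp only [ht, if_neg hy]
      have h1 : 0 < ν y := lt_of_le_of_ne (hν y) (Ne.symm hy)
      have hBz : B y z ≤ ν y := by
        rw [← hB.2.1 y]
        exact Finset.single_le_sum (fun i _ => (hB.1 y i).1) (mem_univ z)
      calc A x y * B y z / ν y ≤ A x y * ν y / ν y := by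
            gcongr
            exact (hA.1 x y).1
        _ = A x y := by rw [mul_div_assoc, div_self hy, mul_one]
  refine ⟨fun x z => ∑ y, t x y z, ⟨fun x z => ⟨?_, ?_⟩, fun x => ?_, fun z => ?_⟩, ?_⟩
  · exact Finset.sum_nonneg fun y _ => ht_nonneg x y z
  · calc ∑ y, t x y z ≤ ∑ y, A x y :=
          Finset.sum_le_sum fun y _ => ht_le x y z
      _ = μ x := hA.2.1 x
      _ ≤ 1 := hμ1 x
  · show ∑ z, ∑ y, t x y z = μ x
    rw [Finset.sum_comm, Finset.sum_congr rfl fun y _ => ht_sum_z x y]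
    exact hA.2.1 x
  · show ∑ x, ∑ y, t x y z = ρ z
    rw [Finset.sum_comm, Finset.sum_congr rfl fun y _ => ht_sum_x y z]
    exact hB.2.2 z
  · have tri : ∀ x y z : V, (G.dist x z : ℝ) ≤ (G.dist x y : ℝ) + (G.dist y z : ℝ) := by
      intro x y z
      exact_mod_cast hconn.dist_triangle
    calc cost G (fun x z => ∑ y, t x y z)
        = ∑ x, ∑ z, ∑ y, t x y z * (G.dist x z : ℝ) := by
          unfold cost
          exact Finset.sum_congr rfl fun x _ => Finset.sum_congr rfl fun z _ =>
            Finset.sum_mul _ _ _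
      _ ≤ ∑ x, ∑ z, ∑ y, t x y z * ((G.dist x y : ℝ) + (G.dist y z : ℝ)) := by
          refine Finset.sum_le_sum fun x _ => Finset.sum_le_sum fun z _ =>
            Finset.sum_le_sum fun y _ => ?_
          exact mul_le_mul_of_nonneg_left (tri x y z) (ht_nonneg x y z)
      _ = (∑ x, ∑ z, ∑ y, t x y z * (G.dist x y : ℝ))
          + (∑ x, ∑ z, ∑ y, t x y z * (G.dist y z : ℝ)) := by
          simp_rw [mul_add, Finset.sum_add_distrib]
      _ = cost G A + cost G B := by
          congr 1
          · rw [Finset.sum_congr rfl fun x _ => Finset.sum_comm]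
            unfold cost
            refine Finset.sum_congr rfl fun x _ => Finset.sum_congr rfl fun y _ => ?_
            rw [← Finset.sum_mul, ht_sum_z x y]
          · rw [Finset.sum_comm]
            rw [Finset.sum_congr rfl fun z _ => Finset.sum_comm]
            rw [Finset.sum_comm]
            unfold cost
            refine Finset.sum_congr rfl fun y _ => Finset.sum_congr rfl fun z _ => ?_
            rw [← Finset.sum_mul, ht_sum_x y z]

lemma wass_triangle (hconn : G.Connected) {μ ν ρ : V → ℝ}
    (hμ : Prob μ) (hν : Prob ν) (hρ : Prob ρ) :
    Wass G μ ρ ≤ Wass G μ ν + Wass G ν ρ := by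
  refine le_of_forall_pos_le_add fun ε hε => ?_
  obtain ⟨A, hA, hAc⟩ := exists_coupling_cost_lt (G := G) hμ hν (half_pos hε)
  obtain ⟨B, hB, hBc⟩ := exists_coupling_cost_lt (G := G) hν hρ (half_pos hε)
  obtain ⟨C, hC, hCc⟩ := glue hconn hμ.le_one hA hB
  have hW := wass_le_cost (G := G) hC
  linarith

end Basic

section Graph
variable {V : Type*} [Fintype V] [DecidableEq V] {G : SimpleGraph V} [DecidableRel G.Adj]

lemma degree_pos (hconn : G.Connected) (hcard : 1 < Fintype.card V) (x : V) :
    0 < G.degree x := by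
  obtain ⟨y, hy⟩ := Fintype.exists_ne_of_one_lt_card hcard x
  obtain ⟨w⟩ := hconn x y
  cases w with
  | nil => exact absurd rfl hy.symm
  | cons h p =>
    rw [← SimpleGraph.card_neighborFinset_eq_degree]
    exact Finset.card_pos.mpr ⟨_, (SimpleGraph.mem_neighborFinset G x _).mpr h⟩

lemma mMeas_sum_mul (α : ℝ) (x : V) (f : V → ℝ) :
    ∑ z, mMeas G α x z * f z
      = α * f x + ((1 - α) / (G.degree x : ℝ)) * ∑ z ∈ G.neighborFinset x, f z := by
  set c := (1 - α) / (G.degree x : ℝ) with hc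
  have key : ∀ z, mMeas G α x z * f z
      = (if z = x then α * f x else 0) + (if G.Adj x z then c * f z else 0) := by
    intro z
    by_cases hz : z = x
    · subst hz; simp [mMeas, G.irrefl]
    · by_cases ha : G.Adj x z <;> simp [mMeas, hz, ha, hc]
  rw [Finset.sum_congr rfl fun z _ => key z, Finset.sum_add_distrib]
  congr 1
  · simp
  · rw [← Finset.sum_filter]
    have : Finset.filter (fun z => G.Adj x z) univ = G.neighborFinset x := by
      ext z; simp
    rw [this, Finset.mul_sum]

lemma mMeas_sum (α : ℝ) (x : V) (hdeg : 0 < G.degree x) :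
    ∑ z, mMeas G α x z = 1 := by
  have h := mMeas_sum_mul (G := G) α x (fun _ => 1)
  simp only [mul_one, Finset.sum_const, SimpleGraph.card_neighborFinset_eq_degree,
    nsmul_eq_mul] at h
  rw [h]
  field_simp
  ring

lemma mMeas_nonneg {α : ℝ} (h0 : 0 ≤ α) (h1 : α ≤ 1) (x z : V) :
    0 ≤ mMeas G α x z := by
  unfold mMeas
  split
  · exact h0
  split
  · exact div_nonneg (by linarith) (Nat.cast_nonneg _)
  · exact le_refl 0

lemma mMeas_prob {α : ℝ} (h0 : 0 ≤ α) (h1 : α ≤ 1) (x : V) (hdeg : 0 < G.degree x) :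
    Prob (mMeas G α x) :=
  ⟨fun z => mMeas_nonneg h0 h1 x z, mMeas_sum α x hdeg⟩

lemma mMeas_dist_sum {α : ℝ} (x : V) (hdeg : 0 < G.degree x) :
    ∑ z, mMeas G α x z * (G.dist x z : ℝ) = 1 - α := by
  rw [mMeas_sum_mul]
  have h1 : ∑ z ∈ G.neighborFinset x, (G.dist x z : ℝ)
      = (G.degree x : ℝ) := by
    rw [Finset.sum_congr rfl fun z hz => ?_]
    · rw [Finset.sum_const, ← SimpleGraph.card_neighborFinset_eq_degree,
        nsmul_eq_mul, mul_one]
    · have := (SimpleGraph.mem_neighborFinset G x z).mp hz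
      rw [SimpleGraph.dist_eq_one_iff_adj.mpr this]
      norm_num
  rw [h1, SimpleGraph.dist_self]
  have : (G.degree x : ℝ) ≠ 0 := by positivity
  field_simp
  simp

lemma wass_lb (hconn : G.Connected) (hcard : 1 < Fintype.card V)
    {α : ℝ} (h0 : 0 ≤ α) (h1 : α ≤ 1) (x y : V) :
    (G.dist x y : ℝ) - 2 * (1 - α) ≤ Wass G (mMeas G α x) (mMeas G α y) := by
  have hdx := degree_pos hconn hcard x
  have hdy := degree_pos hconn hcard y
  have hPx := mMeas_prob (G := G) h0 h1 x hdx
  have hPy := mMeas_prob (G := G) h0 h1 y hdy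
  refine le_csInf ⟨_, _, prodCoupling hPx hPy, rfl⟩ ?_
  rintro c ⟨A, hA, rfl⟩
  have tri : ∀ u v : V, (G.dist x y : ℝ)
      ≤ (G.dist x u : ℝ) + (G.dist u v : ℝ) + (G.dist v y : ℝ) := by
    intro u v
    have h1 := hconn.dist_triangle (u := x) (v := u) (w := y)
    have h2 := hconn.dist_triangle (u := u) (v := v) (w := y)
    push_cast
    exact_mod_cast le_trans h1 (by omega)
  have key : ∀ u v, A u v * ((G.dist x y : ℝ) - (G.dist x u : ℝ) - (G.dist v y : ℝ))
      ≤ A u v * (G.dist u v : ℝ) := by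
    intro u v
    apply mul_le_mul_of_nonneg_left _ (hA.1 u v).1
    have := tri u v
    linarith
  calc (G.dist x y : ℝ) - 2 * (1 - α)
      = ∑ u, ∑ v, A u v * ((G.dist x y : ℝ) - (G.dist x u : ℝ) - (G.dist v y : ℝ)) := by
        simp_rw [mul_sub, Finset.sum_sub_distrib]
        have e0 : ∑ u : V, ∑ v : V, A u v * (G.dist x y : ℝ) = (G.dist x y : ℝ) := by
          rw [Finset.sum_congr rfl fun u (_ : u ∈ univ) =>
            (Finset.sum_mul univ (A u) ((G.dist x y : ℝ))).symm]
          rw [← Finset.sum_mul, coupling_total hA hPx, one_mul]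
        have e1 : ∑ u : V, ∑ v : V, A u v * (G.dist x u : ℝ) = 1 - α := by
          have : ∀ u : V, ∑ v : V, A u v * (G.dist x u : ℝ)
              = mMeas G α x u * (G.dist x u : ℝ) := by
            intro u; rw [← Finset.sum_mul, hA.2.1]
          rw [Finset.sum_congr rfl fun u _ => this u]
          exact mMeas_dist_sum x hdx
        have e2 : ∑ u : V, ∑ v : V, A u v * (G.dist v y : ℝ) = 1 - α := by
          rw [Finset.sum_comm]
          have : ∀ v : V, ∑ u : V, A u v * (G.dist v y : ℝ)
              = mMeas G α y v * (G.dist v y : ℝ) := by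
            intro v; rw [← Finset.sum_mul, hA.2.2]
          rw [Finset.sum_congr rfl fun v _ => this v]
          have := mMeas_dist_sum (α := α) y hdy
          simp_rw [SimpleGraph.dist_comm] at this ⊢
          exact this
        rw [e0, e1, e2]; ring
    _ ≤ ∑ u, ∑ v, A u v * (G.dist u v : ℝ) :=
        Finset.sum_le_sum fun u _ => Finset.sum_le_sum fun v _ => key u v

lemma gfun_le_two (hconn : G.Connected) (hcard : 1 < Fintype.card V)
    {α : ℝ} (h0 : 0 ≤ α) (h1 : α < 1) {x y : V} (hxy : x ≠ y) :
    kappaAlpha G α x y / (1 - α) ≤ 2 := by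
  have hd : (0 : ℝ) < (G.dist x y : ℝ) := by
    exact_mod_cast hconn.pos_dist_of_ne hxy
  have hd1 : (1 : ℝ) ≤ (G.dist x y : ℝ) := by
    exact_mod_cast hconn.pos_dist_of_ne hxy
  have hW := wass_lb hconn hcard h0 h1.le x y
  have ha : 0 < 1 - α := by linarith
  have hdne : (G.dist x y : ℝ) ≠ 0 := ne_of_gt hd
  rw [div_le_iff₀ ha]
  unfold kappaAlpha
  have h6 : ((G.dist x y : ℝ) - 2 * (1 - α)) / (G.dist x y : ℝ)
      ≤ Wass G (mMeas G α x) (mMeas G α y) / (G.dist x y : ℝ) := by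
    gcongr
  have h7 : ((G.dist x y : ℝ) - 2 * (1 - α)) / (G.dist x y : ℝ)
      = 1 - 2 * (1 - α) / (G.dist x y : ℝ) := by
    field_simp
  have h8 : 2 * (1 - α) / (G.dist x y : ℝ) ≤ 2 * (1 - α) :=
    div_le_self (by linarith) hd1
  rw [h7] at h6
  linarith

lemma mMeas_comb {α β : ℝ} (ha1 : (1:ℝ) - α ≠ 0) (x u : V) :
    mMeas G β x u = (1 - β) / (1 - α) * mMeas G α x u
      + (1 - (1 - β) / (1 - α)) * (if u = x then (1:ℝ) else 0) := by
  unfold mMeas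
  by_cases hu : u = x
  · simp only [if_pos hu]
    field_simp
    ring
  · simp only [if_neg hu]
    by_cases hadj : G.Adj x u
    · simp only [if_pos hadj]
      rw [mul_zero, add_zero]
      field_simp
    · simp only [if_neg hadj]
      ring

lemma kappa_div_monoOn (hconn : G.Connected) (hcard : 1 < Fintype.card V)
    {x y : V} (hxy : x ≠ y) :
    MonotoneOn (fun α => kappaAlpha G α x y / (1 - α)) (Set.Ico (0:ℝ) 1) := by
  rintro α ⟨hα0, hα1⟩ β ⟨hβ0, hβ1⟩ hab
  rcases eq_or_lt_of_le hab with rfl | hlt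
  · exact le_refl _
  have ha1 : 0 < 1 - α := by linarith
  have hb1 : 0 < 1 - β := by linarith
  set l : ℝ := (1 - β) / (1 - α) with hldef
  have hl0 : 0 < l := div_pos hb1 ha1
  have hl1 : l ≤ 1 := by
    rw [hldef, div_le_one ha1]; linarith
  have hd : (0 : ℝ) < (G.dist x y : ℝ) := by
    exact_mod_cast hconn.pos_dist_of_ne hxy
  have hdne : (G.dist x y : ℝ) ≠ 0 := ne_of_gt hd
  have hdx := degree_pos hconn hcard x
  have hdy := degree_pos hconn hcard y
  have hPx := mMeas_prob (G := G) hα0 hα1.le x hdx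
  have hPy := mMeas_prob (G := G) hα0 hα1.le y hdy
  set Wα := Wass G (mMeas G α x) (mMeas G α y) with hWa
  set Wβ := Wass G (mMeas G β x) (mMeas G β y) with hWb
  have hmix : Wβ ≤ l * Wα + (1 - l) * (G.dist x y : ℝ) := by
    refine le_of_forall_pos_le_add fun ε hε => ?_
    obtain ⟨A, hACoup, hAc⟩ := exists_coupling_cost_lt (G := G) hPx hPy hε
    set C : V → V → ℝ := fun u v => l * A u v
      + (1 - l) * ((if u = x then (1:ℝ) else 0) * (if v = y then (1:ℝ) else 0)) with hCdef
    have hC : IsCoupling C (mMeas G β x) (mMeas G β y) := by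
      refine ⟨fun u v => ⟨?_, ?_⟩, fun u => ?_, fun v => ?_⟩
      · have h1 : (0:ℝ) ≤ (if u = x then (1:ℝ) else 0) * (if v = y then (1:ℝ) else 0) := by
          split_ifs <;> norm_num
        have h2 := (hACoup.1 u v).1
        have := mul_nonneg hl0.le h2
        have := mul_nonneg (by linarith : (0:ℝ) ≤ 1 - l) h1
        simp only [hCdef]
        linarith
      · have h1 : (if u = x then (1:ℝ) else 0) * (if v = y then (1:ℝ) else 0) ≤ 1 := by
          split_ifs <;> norm_num
        have h1' : (0:ℝ) ≤ (if u = x then (1:ℝ) else 0) * (if v = y then (1:ℝ) else 0) := by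
          split_ifs <;> norm_num
        have h2 := (hACoup.1 u v).2
        have h3 := (hACoup.1 u v).1
        simp only [hCdef]
        nlinarith
      · show ∑ v, (l * A u v
          + (1 - l) * ((if u = x then (1:ℝ) else 0) * (if v = y then (1:ℝ) else 0)))
            = mMeas G β x u
        rw [Finset.sum_add_distrib, ← Finset.mul_sum, hACoup.2.1, ← Finset.mul_sum,
          ← Finset.mul_sum]
        have : ∑ v, (if v = y then (1:ℝ) else 0) = 1 := by simp
        rw [this, mul_one]
        rw [mMeas_comb (β := β) (ne_of_gt ha1) x u]
        try ring
      · show ∑ u, (l * A u v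
          + (1 - l) * ((if u = x then (1:ℝ) else 0) * (if v = y then (1:ℝ) else 0)))
            = mMeas G β y v
        rw [Finset.sum_add_distrib, ← Finset.mul_sum, hACoup.2.2]
        have e : ∑ u, (1 - l) * ((if u = x then (1:ℝ) else 0) * (if v = y then (1:ℝ) else 0))
            = (1 - l) * (if v = y then (1:ℝ) else 0) := by
          rw [← Finset.mul_sum, ← Finset.sum_mul]
          have : ∑ u, (if u = x then (1:ℝ) else 0) = 1 := by simp
          rw [this, one_mul]
        rw [e]
        rw [mMeas_comb (β := β) (ne_of_gt ha1) y v]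
        try ring
    have hcost : cost G C = l * cost G A + (1 - l) * (G.dist x y : ℝ) := by
      unfold cost
      have hsplit : ∀ u v, C u v * (G.dist u v : ℝ)
          = l * (A u v * (G.dist u v : ℝ))
            + (1 - l) * (((if u = x then (1:ℝ) else 0) * (if v = y then (1:ℝ) else 0))
              * (G.dist u v : ℝ)) := by
        intro u v; simp only [hCdef]; ring
      simp_rw [hsplit, Finset.sum_add_distrib, ← Finset.mul_sum]
      congr 1
      have hpt : ∑ u : V, ∑ v : V,
          ((if u = x then (1:ℝ) else 0) * (if v = y then (1:ℝ) else 0)) * (G.dist u v : ℝ)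
          = (G.dist x y : ℝ) := by
        have inner : ∀ u : V, ∑ v : V,
            ((if u = x then (1:ℝ) else 0) * (if v = y then (1:ℝ) else 0)) * (G.dist u v : ℝ)
            = if u = x then (G.dist u y : ℝ) else 0 := by
          intro u
          by_cases hu : u = x <;> simp [hu]
        rw [Finset.sum_congr rfl fun u _ => inner u]
        simp
      rw [hpt]
    have h4 := wass_le_cost (G := G) hC
    have h5 : l * cost G A ≤ l * (Wα + ε) := mul_le_mul_of_nonneg_left hAc.le hl0.le
    have h6 : l * ε ≤ ε := by nlinarith
    calc Wβ ≤ cost G C := h4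
      _ = l * cost G A + (1 - l) * (G.dist x y : ℝ) := hcost
      _ ≤ l * Wα + (1 - l) * (G.dist x y : ℝ) + ε := by nlinarith
  -- final algebra
  show kappaAlpha G α x y / (1 - α) ≤ kappaAlpha G β x y / (1 - β)
  unfold kappaAlpha
  rw [div_le_div_iff₀ ha1 hb1]
  have hl : l * (1 - α) = 1 - β := div_mul_cancel₀ _ (ne_of_gt ha1)
  have h1 : Wβ * (1 - α) ≤ (1 - β) * Wα + (β - α) * (G.dist x y : ℝ) := by
    calc Wβ * (1 - α) ≤ (l * Wα + (1 - l) * (G.dist x y : ℝ)) * (1 - α) :=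
          mul_le_mul_of_nonneg_right hmix ha1.le
      _ = (l * (1 - α)) * Wα + ((1 - α) - l * (1 - α)) * (G.dist x y : ℝ) := by ring
      _ = (1 - β) * Wα + (β - α) * (G.dist x y : ℝ) := by rw [hl]; ring
  have h2 : Wβ * (1 - α) / (G.dist x y : ℝ)
      ≤ ((1 - β) * Wα + (β - α) * (G.dist x y : ℝ)) / (G.dist x y : ℝ) := by gcongr
  have h3 : ((1 - β) * Wα + (β - α) * (G.dist x y : ℝ)) / (G.dist x y : ℝ)
      = (1 - β) * (Wα / (G.dist x y : ℝ)) + (β - α) := by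
    field_simp
  rw [h3] at h2
  have h4 : Wβ * (1 - α) / (G.dist x y : ℝ) = (Wβ / (G.dist x y : ℝ)) * (1 - α) := by
    ring
  rw [h4] at h2
  nlinarith [h2]

lemma tendsto_gfun (hconn : G.Connected) (hcard : 1 < Fintype.card V)
    {x y : V} (hxy : x ≠ y) :
    Filter.Tendsto (fun α => kappaAlpha G α x y / (1 - α)) (nhdsWithin 1 (Set.Iio 1))
      (nhds (kappa G x y)) := by
  set g : ℝ → ℝ := fun α => kappaAlpha G α x y / (1 - α) with hg
  set g' : ℝ → ℝ := fun α => g (max α 0) with hg'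
  have hmono := kappa_div_monoOn hconn hcard hxy
  have hmem : ∀ a : ℝ, a < 1 → max a 0 ∈ Set.Ico (0:ℝ) 1 := fun a ha =>
    ⟨le_max_right _ _, max_lt ha one_pos⟩
  have hmono' : MonotoneOn g' (Set.Iio (1:ℝ)) := by
    intro a ha b hb hab
    exact hmono (hmem a ha) (hmem b hb) (max_le_max hab (le_refl 0))
  have hbdd : BddAbove (g' '' Set.Iio (1:ℝ)) := by
    refine ⟨2, ?_⟩
    rintro _ ⟨a, ha, rfl⟩
    have h := hmem a ha
    exact gfun_le_two hconn hcard h.1 h.2 hxy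
  have h1 := hmono'.tendsto_nhdsLT hbdd
  have heq : g' =ᶠ[nhdsWithin (1:ℝ) (Set.Iio 1)] g := by
    filter_upwards [Ioo_mem_nhdsLT_of_mem (Set.mem_Ioc.mpr ⟨zero_lt_one, le_refl (1:ℝ)⟩)]
      with a ha
    have : max a 0 = a := max_eq_left ha.1.le
    simp only [hg', this]
  have h2 : Filter.Tendsto g (nhdsWithin 1 (Set.Iio 1))
      (nhds (sSup (g' '' Set.Iio 1))) := h1.congr' heq
  have h3 : kappa G x y = sSup (g' '' Set.Iio 1) := by
    have : kappa G x y = limUnder (nhdsWithin 1 (Set.Iio 1)) g := rfl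
    rw [this, h2.limUnder_eq]
  rw [h3]
  exact h2

lemma chain_ineq (hconn : G.Connected) (hcard : 1 < Fintype.card V)
    {x z y : V} (hxz : G.Adj x z) {n : ℕ} (hn : 0 < n)
    (hzy : G.dist z y = n) (hxy : G.dist x y = n + 1)
    {α : ℝ} (h0 : 0 ≤ α) (h1 : α < 1) :
    (kappaAlpha G α x z / (1 - α) + (n : ℝ) * (kappaAlpha G α z y / (1 - α))) / ((n : ℝ) + 1)
      ≤ kappaAlpha G α x y / (1 - α) := by
  have hdx := degree_pos hconn hcard x
  have hdz := degree_pos hconn hcard z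
  have hdy := degree_pos hconn hcard y
  have hPx := mMeas_prob (G := G) h0 h1.le x hdx
  have hPz := mMeas_prob (G := G) h0 h1.le z hdz
  have hPy := mMeas_prob (G := G) h0 h1.le y hdy
  have tri := wass_triangle (G := G) hconn hPx hPz hPy
  have ha : 0 < 1 - α := by linarith
  have hN : (0:ℝ) < (n:ℝ) := by exact_mod_cast hn
  have hN1 : (0:ℝ) < (n:ℝ) + 1 := by linarith
  have hdxz : (G.dist x z : ℝ) = 1 := by
    rw [SimpleGraph.dist_eq_one_iff_adj.mpr hxz]; norm_num
  have hdzy : (G.dist z y : ℝ) = (n : ℝ) := by rw [hzy]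
  have hdxy : (G.dist x y : ℝ) = (n : ℝ) + 1 := by rw [hxy]; push_cast; ring
  set Wxz := Wass G (mMeas G α x) (mMeas G α z) with hW1
  set Wzy := Wass G (mMeas G α z) (mMeas G α y) with hW2
  set Wxy := Wass G (mMeas G α x) (mMeas G α y) with hW3
  have e1 : kappaAlpha G α x z = 1 - Wxz := by
    unfold kappaAlpha; rw [hdxz, div_one]
  have e2 : (n:ℝ) * kappaAlpha G α z y = (n:ℝ) - Wzy := by
    unfold kappaAlpha; rw [hdzy]
    field_simp
    rw [hW2]
  have e3 : ((n:ℝ) + 1) * kappaAlpha G α x y = ((n:ℝ) + 1) - Wxy := by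
    unfold kappaAlpha; rw [hdxy]
    field_simp
    rw [hW3]
  have key : kappaAlpha G α x z + (n:ℝ) * kappaAlpha G α z y
      ≤ ((n:ℝ) + 1) * kappaAlpha G α x y := by
    rw [e1, e2, e3]; linarith
  calc (kappaAlpha G α x z / (1 - α) + (n : ℝ) * (kappaAlpha G α z y / (1 - α))) / ((n : ℝ) + 1)
      = ((kappaAlpha G α x z + (n:ℝ) * kappaAlpha G α z y) / (1 - α)) / ((n:ℝ) + 1) := by
        ring
    _ ≤ ((((n:ℝ) + 1) * kappaAlpha G α x y) / (1 - α)) / ((n:ℝ) + 1) := by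
        gcongr
    _ = kappaAlpha G α x y / (1 - α) := by
        field_simp

end Graph
end LLYAux

theorem stmt11 {V : Type*} [Fintype V] [DecidableEq V]
    (G : SimpleGraph V) [DecidableRel G.Adj]
    (hconn : G.Connected) (hcard : 1 < Fintype.card V)
    (κ₀ : ℝ) (h : ∀ x y : V, G.Adj x y → κ₀ ≤ kappa G x y) :
    ∀ x y : V, x ≠ y → κ₀ ≤ kappa G x y := by
  intro x y hxy
  suffices key : ∀ n : ℕ, ∀ x y : V, G.dist x y = n → x ≠ y → κ₀ ≤ kappa G x y from
    key (G.dist x y) x y rfl hxy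
  intro n
  induction n with
  | zero =>
    intro x y hd hxy
    exact absurd (hconn.dist_eq_zero_iff.mp hd) hxy
  | succ n ih =>
    intro x y hd hxy
    rcases Nat.eq_zero_or_pos n with rfl | hn
    · exact h x y (SimpleGraph.dist_eq_one_iff_adj.mp hd)
    · obtain ⟨p, hp⟩ := hconn.exists_walk_length_eq_dist x y
      rw [hd] at hp
      cases p with
      | nil => simp at hp
      | @cons _ z _ hadj q =>
        have hq : q.length = n := by simpa using hp
        have hxz1 : G.dist x z = 1 := SimpleGraph.dist_eq_one_iff_adj.mpr hadj
        have hzy : G.dist z y = n := by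
          have h1 : G.dist z y ≤ n := hq ▸ SimpleGraph.dist_le q
          have h2 := hconn.dist_triangle (u := x) (v := z) (w := y)
          omega
        have hzy_ne : z ≠ y := by
          intro hzy'; subst hzy'; rw [SimpleGraph.dist_self] at hzy; omega
        have hk1 : κ₀ ≤ kappa G x z := h x z hadj
        have hk2 : κ₀ ≤ kappa G z y := ih z y hzy hzy_ne
        have t0 := LLYAux.tendsto_gfun (G := G) hconn hcard hxy
        have t1 := LLYAux.tendsto_gfun (G := G) hconn hcard hadj.ne
        have t2 := LLYAux.tendsto_gfun (G := G) hconn hcard hzy_ne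
        have tcomb : Filter.Tendsto
            (fun α => (kappaAlpha G α x z / (1 - α)
              + (n : ℝ) * (kappaAlpha G α z y / (1 - α))) / ((n:ℝ)+1))
            (nhdsWithin 1 (Set.Iio 1))
            (nhds ((kappa G x z + (n:ℝ) * kappa G z y) / ((n:ℝ)+1))) :=
          (t1.add (t2.const_mul _)).div_const _
        have hev : ∀ᶠ α in nhdsWithin (1:ℝ) (Set.Iio 1),
            (fun α => (kappaAlpha G α x z / (1 - α)
              + (n:ℝ) * (kappaAlpha G α z y / (1 - α))) / ((n:ℝ)+1)) α
              ≤ (fun α => kappaAlpha G α x y / (1 - α)) α := by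
          filter_upwards [Ioo_mem_nhdsLT_of_mem
            (Set.mem_Ioc.mpr ⟨zero_lt_one, le_refl (1:ℝ)⟩)] with α hα
          exact LLYAux.chain_ineq hconn hcard hadj hn hzy hd hα.1.le hα.2
        have hle := le_of_tendsto_of_tendsto tcomb t0 hev
        have hfin : κ₀ ≤ (kappa G x z + (n:ℝ) * kappa G z y) / ((n:ℝ)+1) := by
          rw [le_div_iff₀ (by positivity)]
          have hn0 : (0:ℝ) ≤ (n:ℝ) := Nat.cast_nonneg n
          nlinarith
        linarith
end
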